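/- arXiv:2406.15739 — 4 statements merged into one kernel-verified Lean document; each statement's English description precedes it below -/
import Mathlib

section
/- Let G = (V,E) be a finite connected k-regular graph whose adjacency matrix has at least two distinct eigenvalues; let τ be its smallest eigenvalue and μ its second smallest eigenvalue. Let V_k and V_τ be the eigenspaces of k and τ respectively, and let U = V_k ⊕ V_τ. Then for every subset S ⊆ V, 2·ed(S)/|V| ≥ (k−τ)·|S|²/|V|² + τ·|S|/|V| − (τ−μ)·‖1_S − Proj_U(1_S)‖². -/
set_option linter.unusedVariables false

open scoped Classical

noncomputable section

/-- The derangement graph on `Sym(n)`: permutations adjacent iff they disagree everywhere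
(equivalently, `σ τ⁻¹` is a derangement). -/
def derangementGraph (n : ℕ) : SimpleGraph (Equiv.Perm (Fin n)) where
  Adj σ τ := σ ≠ τ ∧ ∀ i, σ i ≠ τ i
  symm := ⟨fun σ τ h => ⟨h.1.symm, fun i => (h.2 i).symm⟩⟩
  loopless := ⟨fun σ h => h.1 rfl⟩

/-- The star `A_{a→b}` in the derangement graph: permutations sending `a` to `b`. -/
def derStar (n : ℕ) (a b : Fin n) : Set (Equiv.Perm (Fin n)) := {σ | σ a = b}

/-- Perfect matchings of `K_{2n}`, encoded as fixed-point-free involutions of `Fin (2n)`. -/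
abbrev PMatching (n : ℕ) :=
  {f : Equiv.Perm (Fin (2 * n)) // (∀ x, f (f x) = x) ∧ ∀ x, f x ≠ x}

/-- The perfect matching graph `M_n`: matchings adjacent iff they share no edge. -/
def matchingGraph (n : ℕ) : SimpleGraph (PMatching n) where
  Adj m m' := m ≠ m' ∧ ∀ x, m.1 x ≠ m'.1 x
  symm := ⟨fun m m' h => ⟨h.1.symm, fun x => (h.2 x).symm⟩⟩
  loopless := ⟨fun m h => h.1 rfl⟩

/-- The star `S_e` of a (non-diagonal) pair `e : Sym2 (Fin (2n))`:
all perfect matchings containing the edge `e`. -/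
def pmStar (n : ℕ) (e : Sym2 (Fin (2 * n))) : Set (PMatching n) :=
  {m | ∃ x, e = s(x, m.1 x)}

/-- A set of vertices is independent if it spans no edges. -/
def IsIndepSet {V : Type*} (G : SimpleGraph V) (s : Set V) : Prop :=
  ∀ a ∈ s, ∀ b ∈ s, ¬ G.Adj a b

/-- The independence number of a finite graph. -/
noncomputable def indepNum {V : Type*} [Fintype V] (G : SimpleGraph V) : ℕ :=
  sSup {k | ∃ s : Set V, IsIndepSet G s ∧ s.ncard = k}

/-- `edIn G s` is the number of edges of `G` with both endpoints in `s`. -/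
noncomputable def edIn {V : Type*} (G : SimpleGraph V) (s : Set V) : ℕ :=
  Nat.card {e : Sym2 V // e ∈ G.edgeSet ∧ ∀ v ∈ e, v ∈ s}

/-- Probability that the random spanning subgraph `G_p` of `G` (each edge of `G` kept
independently with probability `p`) satisfies the predicate `P`. -/
noncomputable def prRandSub {V : Type*} [Fintype V] (G : SimpleGraph V) (p : ℝ)
    (P : SimpleGraph V → Prop) : ℝ :=
  ∑ S ∈ G.edgeFinset.powerset,
    if P (SimpleGraph.fromEdgeSet (S : Set (Sym2 V))) then
      p ^ S.card * (1 - p) ^ (G.edgeFinset.card - S.card) else 0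

/-- The normalized inner product `⟨f,g⟩ = (1/|V|) Σ_v f(v)g(v)`. -/
noncomputable def vInner {V : Type*} [Fintype V] (f g : V → ℝ) : ℝ :=
  (1 / (Fintype.card V : ℝ)) * ∑ v, f v * g v

set_option linter.unusedSectionVars false

lemma twice_edIn {V : Type*} [Fintype V] [DecidableEq V] (G : SimpleGraph V) [DecidableRel G.Adj] (S : Set V) :
    2 * (edIn G S : ℕ) =
      (Finset.univ.filter fun p : V × V => G.Adj p.1 p.2 ∧ p.1 ∈ S ∧ p.2 ∈ S).card := by
  set G' : SimpleGraph V :=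
    { Adj := fun v u => G.Adj v u ∧ v ∈ S ∧ u ∈ S
      symm := ⟨fun v u h => ⟨h.1.symm, h.2.2, h.2.1⟩⟩
      loopless := ⟨fun v h => G.loopless.irrefl v h.1⟩ } with hG'
  have hedge : ∀ e : Sym2 V, e ∈ G'.edgeSet ↔ (e ∈ G.edgeSet ∧ ∀ v ∈ e, v ∈ S) := by
    intro e
    induction e using Sym2.ind with
    | _ a b =>
      simp only [SimpleGraph.mem_edgeSet, Sym2.mem_iff]
      constructor
      · rintro ⟨h1, h2, h3⟩
        exact ⟨h1, fun v hv => by rcases hv with rfl | rfl <;> [exact h2; exact h3]⟩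
      · rintro ⟨h1, h2⟩
        exact ⟨h1, h2 a (Or.inl rfl), h2 b (Or.inr rfl)⟩
  have h1 : edIn G S = G'.edgeFinset.card := by
    rw [edIn, SimpleGraph.edgeFinset_card, Nat.card_eq_fintype_card]
    exact Fintype.card_congr (Equiv.subtypeEquivRight fun e => (hedge e).symm)
  rw [h1, SimpleGraph.two_mul_card_edgeFinset]

lemma mem_eig_transfer {V : Type*} [Fintype V] [DecidableEq V] (A : Matrix V V ℝ) (x : ℝ) (v : EuclideanSpace ℝ V) :
    v ∈ Module.End.eigenspace (Matrix.toEuclideanLin A) x ↔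
      ((WithLp.equiv 2 (V → ℝ)) v) ∈ Module.End.eigenspace (Matrix.mulVecLin A) x := by
  rw [Module.End.mem_eigenspace_iff, Module.End.mem_eigenspace_iff]
  constructor
  · intro h
    have := congrArg (WithLp.equiv 2 (V → ℝ)) h
    simpa [Matrix.toEuclideanLin_apply, Matrix.mulVecLin_apply] using this
  · intro h
    apply (WithLp.equiv 2 (V → ℝ)).injective
    simpa [Matrix.toEuclideanLin_apply, Matrix.mulVecLin_apply] using h

lemma hasEig_transfer {V : Type*} [Fintype V] [DecidableEq V] (A : Matrix V V ℝ) (x : ℝ) :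
    Module.End.HasEigenvalue (Matrix.toEuclideanLin A) x ↔
      Module.End.HasEigenvalue (Matrix.mulVecLin A) x := by
  rw [Module.End.hasEigenvalue_iff, Submodule.ne_bot_iff, Module.End.hasEigenvalue_iff,
    Submodule.ne_bot_iff]
  constructor
  · rintro ⟨v, hv, hv0⟩
    exact ⟨(WithLp.equiv 2 (V → ℝ)) v, (mem_eig_transfer A x v).mp hv,
      fun h => hv0 ((WithLp.equiv 2 (V → ℝ)).injective (by simpa using h))⟩
  · rintro ⟨v, hv, hv0⟩
    refine ⟨(WithLp.equiv 2 (V → ℝ)).symm v, ?_,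
      fun h => hv0 (by simpa using congrArg (WithLp.equiv 2 (V → ℝ)) h)⟩
    rw [mem_eig_transfer]
    simpa using hv

lemma eig_bound {V : Type*} [Fintype V] [DecidableEq V] (G : SimpleGraph V) [DecidableRel G.Adj] [Nonempty V] (k : ℕ)
    (hreg : ∀ v, G.degree v = k) (x : ℝ)
    (hx : Module.End.HasEigenvalue (Matrix.mulVecLin (G.adjMatrix ℝ)) x) :
    |x| ≤ k := by
  obtain ⟨w, hw⟩ := hx.exists_hasEigenvector
  obtain ⟨v, -, hv⟩ := Finset.exists_max_image Finset.univ (fun v => |w v|)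
    ⟨Classical.arbitrary V, Finset.mem_univ _⟩
  have hwv : 0 < |w v| := by
    rcases Function.ne_iff.mp hw.2 with ⟨u, hu⟩
    calc 0 < |w u| := abs_pos.mpr hu
    _ ≤ |w v| := hv u (Finset.mem_univ u)
  have key : (G.adjMatrix ℝ).mulVec w = x • w := hw.apply_eq_smul
  have h1 : |x| * |w v| = |((G.adjMatrix ℝ).mulVec w) v| := by
    rw [key]; simp [abs_mul]
  have h2 : |((G.adjMatrix ℝ).mulVec w) v| ≤ (k : ℝ) * |w v| := by
    rw [SimpleGraph.adjMatrix_mulVec_apply]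
    calc |∑ u ∈ G.neighborFinset v, w u| ≤ ∑ u ∈ G.neighborFinset v, |w u| :=
          Finset.abs_sum_le_sum_abs _ _
      _ ≤ ∑ u ∈ G.neighborFinset v, |w v| :=
          Finset.sum_le_sum fun u _ => hv u (Finset.mem_univ u)
      _ = (k : ℝ) * |w v| := by
          rw [Finset.sum_const, SimpleGraph.card_neighborFinset_eq_degree, hreg, nsmul_eq_mul]
  exact le_of_mul_le_mul_right (h1.le.trans h2) hwv

lemma inner_bridge {V : Type*} [Fintype V] (x y : EuclideanSpace ℝ V) :
    (inner ℝ x y : ℝ) =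
      dotProduct ((WithLp.equiv 2 (V → ℝ)) x) ((WithLp.equiv 2 (V → ℝ)) y) := by
  simp [PiLp.inner_apply, RCLike.inner_apply, starRingEnd_apply, dotProduct, mul_comm]

/-- Spectral lower bound on the edge density of an induced subgraph: for a connected
`k`-regular graph with least eigenvalue `τ` and second smallest eigenvalue `μ`, with
`U = V_k ⊕ V_τ` and `g = Proj_U(1_S)`,
`2 ed(S)/|V| ≥ (k-τ)|S|²/|V|² + τ|S|/|V| - (τ-μ)‖1_S - Proj_U 1_S‖²`. -/
theorem stmt4 {V : Type*} [Fintype V] [DecidableEq V] (G : SimpleGraph V)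
    [DecidableRel G.Adj] (hconn : G.Connected)
    (k : ℕ) (hreg : ∀ v, G.degree v = k) (τ μ : ℝ)
    (hτev : Module.End.HasEigenvalue (Matrix.mulVecLin (G.adjMatrix ℝ)) τ)
    (hμev : Module.End.HasEigenvalue (Matrix.mulVecLin (G.adjMatrix ℝ)) μ)
    (hτmin : ∀ x : ℝ, Module.End.HasEigenvalue (Matrix.mulVecLin (G.adjMatrix ℝ)) x → τ ≤ x)
    (hτμ : τ < μ)
    (hμ2 : ∀ x : ℝ,
      Module.End.HasEigenvalue (Matrix.mulVecLin (G.adjMatrix ℝ)) x → x ≠ τ → μ ≤ x)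
    (S : Set V) (g : V → ℝ)
    (hgU : g ∈ Module.End.eigenspace (Matrix.mulVecLin (G.adjMatrix ℝ)) (k : ℝ) ⊔
        Module.End.eigenspace (Matrix.mulVecLin (G.adjMatrix ℝ)) τ)
    (hproj : ∀ u ∈ Module.End.eigenspace (Matrix.mulVecLin (G.adjMatrix ℝ)) (k : ℝ) ⊔
        Module.End.eigenspace (Matrix.mulVecLin (G.adjMatrix ℝ)) τ,
      vInner (Set.indicator S 1 - g) u = 0) :
    ((k : ℝ) - τ) * (S.ncard : ℝ) ^ 2 / (Fintype.card V : ℝ) ^ 2 +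
        τ * (S.ncard : ℝ) / (Fintype.card V : ℝ) -
        (τ - μ) * vInner (Set.indicator S 1 - g) (Set.indicator S 1 - g) ≤
      2 * (edIn G S : ℝ) / (Fintype.card V : ℝ) := by
  have hne : Nonempty V := hconn.nonempty
  set A := G.adjMatrix ℝ with hAdef
  set U := Module.End.eigenspace (Matrix.mulVecLin A) (k : ℝ) ⊔
    Module.End.eigenspace (Matrix.mulVecLin A) τ with hUdef
  set n := Fintype.card V with hndef
  have hn0 : (0:ℝ) < n := by exact_mod_cast Fintype.card_pos
  set f : V → ℝ := S.indicator 1 with hfdef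
  set h : V → ℝ := f - g with hhdef
  -- symmetry of A
  have hsym : A.transpose = A := SimpleGraph.isSymm_adjMatrix G
  have hsymm_ip : ∀ a b : V → ℝ, dotProduct a (A.mulVec b) =
      dotProduct (A.mulVec a) b := by
    intro a b
    rw [Matrix.dotProduct_mulVec, ← Matrix.mulVec_transpose, hsym]
  -- h ⟂ U
  have hperp : ∀ u ∈ U, dotProduct h u = 0 := by
    intro u hu
    have := hproj u hu
    rw [vInner] at this
    rcases mul_eq_zero.mp this with h' | h'
    · exact absurd h' (by positivity)
    · exact h'
  -- eigenvalue inequalities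
  have hμk : μ ≤ k := (abs_le.mp (eig_bound G k hreg μ hμev)).2
  have hτk : τ < k := lt_of_lt_of_le hτμ hμk
  -- orthogonality of eigenvectors
  have horth : ∀ (a b : ℝ) (u w : V → ℝ), A.mulVec u = a • u → A.mulVec w = b • w → a ≠ b →
      dotProduct u w = 0 := by
    intro a b u w hu hw hab
    have : a * dotProduct u w = b * dotProduct u w := by
      calc a * dotProduct u w = dotProduct (a • u) w := by
            rw [smul_dotProduct]; simp [smul_eq_mul]
        _ = dotProduct (A.mulVec u) w := by rw [hu]
        _ = dotProduct u (A.mulVec w) := (hsymm_ip u w).symm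
        _ = dotProduct u (b • w) := by rw [hw]
        _ = b * dotProduct u w := by rw [dotProduct_smul]; simp [smul_eq_mul]
    have h2 : (a - b) * dotProduct u w = 0 := by ring_nf; linarith
    rcases mul_eq_zero.mp h2 with h' | h'
    · exact absurd (sub_eq_zero.mp h') hab
    · exact h'
  -- decompose g
  obtain ⟨p, hp, q, hq, hpq⟩ := Submodule.mem_sup.mp hgU
  have hAp : A.mulVec p = (k:ℝ) • p := by
    have := Module.End.mem_eigenspace_iff.mp hp; rwa [Matrix.mulVecLin_apply] at this
  have hAq : A.mulVec q = τ • q := by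
    have := Module.End.mem_eigenspace_iff.mp hq; rwa [Matrix.mulVecLin_apply] at this
  -- constant vector is k-eigenvector
  have hA1 : A.mulVec (fun _ => (1:ℝ)) = (k:ℝ) • (fun _ => (1:ℝ)) := by
    funext v
    simp [hAdef, SimpleGraph.adjMatrix_mulVec_apply, hreg v]
  have h1U : (fun _ => (1:ℝ)) ∈ U := Submodule.mem_sup_left
    (Module.End.mem_eigenspace_iff.mpr (by rw [Matrix.mulVecLin_apply]; exact hA1))
  -- basic dot products
  have hff : dotProduct f f = (S.ncard : ℝ) := by
    have : ∀ v, f v * f v = f v := by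
      intro v; by_cases hv : v ∈ S <;> simp [hfdef, Set.indicator, hv]
    rw [dotProduct]
    simp only [this]
    rw [hfdef]
    rw [Set.ncard_eq_toFinset_card']
    simp [Set.indicator_apply, Finset.sum_ite, Set.toFinset]
  have hf1 : dotProduct f (fun _ => (1:ℝ)) = (S.ncard : ℝ) := by
    have : ∀ v, f v * 1 = f v := fun v => mul_one _
    rw [dotProduct]
    simp only [this]
    rw [hfdef, Set.ncard_eq_toFinset_card']
    simp [Set.indicator_apply, Finset.sum_ite, Set.toFinset]
  -- p ⬝ 1 = |S|
  have hg1 : dotProduct g (fun _ => (1:ℝ)) = (S.ncard : ℝ) := by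
    have h0 := hperp _ h1U
    rw [hhdef, sub_dotProduct] at h0
    rw [← hf1]; linarith
  have hq1 : dotProduct q (fun _ => (1:ℝ)) = 0 :=
    horth τ (k:ℝ) q _ hAq hA1 (ne_of_lt hτk)
  have hp1 : dotProduct p (fun _ => (1:ℝ)) = (S.ncard : ℝ) := by
    rw [← hpq, add_dotProduct] at hg1
    linarith
  have hpq0 : dotProduct p q = 0 :=
    horth (k:ℝ) τ p q hAp hAq (ne_of_gt hτk)
  -- Cauchy-Schwarz
  have hCS : (S.ncard : ℝ)^2 ≤ dotProduct p p * n := by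
    have h2 := Finset.sum_mul_sq_le_sq_mul_sq Finset.univ p (fun _ => (1:ℝ))
    have hp1' : (∑ v, p v) = (S.ncard:ℝ) := by
      simpa [dotProduct] using hp1
    have hsq : (∑ v, p v ^ 2) = dotProduct p p := by
      simp [dotProduct, sq]
    simp only [mul_one, one_pow, Finset.sum_const, Finset.card_univ, nsmul_eq_mul, hp1',
      hsq] at h2
    exact h2
  -- energy decomposition
  have hgh0 : dotProduct g h = 0 := by
    rw [dotProduct_comm]; exact hperp g hgU
  have hdecomp : dotProduct f f =
      dotProduct g g + dotProduct h h := by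
    have hf : f = g + h := by rw [hhdef]; ring_nf
    rw [hf, add_dotProduct, dotProduct_add, dotProduct_add]
    have : dotProduct h g = 0 := by rw [dotProduct_comm]; exact hgh0
    rw [hgh0, this]; ring
  have hgg : dotProduct g g = dotProduct p p + dotProduct q q := by
    rw [← hpq, add_dotProduct, dotProduct_add, dotProduct_add, hpq0]
    have : dotProduct q p = 0 := by rw [dotProduct_comm]; exact hpq0
    rw [this]; ring
  have hqq : dotProduct q q =
      (S.ncard : ℝ) - dotProduct p p - dotProduct h h := by
    rw [hff] at hdecomp; linarith
  -- g ⬝ A g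
  have hAg : A.mulVec g = (k:ℝ) • p + τ • q := by
    rw [← hpq, Matrix.mulVec_add, hAp, hAq]
  have hgAg : dotProduct g (A.mulVec g) =
      (k:ℝ) * dotProduct p p + τ * dotProduct q q := by
    rw [hAg, ← hpq]
    rw [add_dotProduct, dotProduct_add, dotProduct_add,
      dotProduct_smul, dotProduct_smul, dotProduct_smul,
      dotProduct_smul]
    have h1 : dotProduct q p = 0 := by rw [dotProduct_comm]; exact hpq0
    simp [smul_eq_mul, hpq0, h1]
  have hAgU : A.mulVec g ∈ U := by
    rw [hAg]
    exact Submodule.add_mem _ (Submodule.smul_mem _ _ (Submodule.mem_sup_left hp))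
      (Submodule.smul_mem _ _ (Submodule.mem_sup_right hq))
  -- split f A f
  have hfAf : dotProduct f (A.mulVec f) =
      dotProduct g (A.mulVec g) + dotProduct h (A.mulVec h) := by
    have hf : f = g + h := by rw [hhdef]; ring_nf
    rw [hf, Matrix.mulVec_add, add_dotProduct, dotProduct_add,
      dotProduct_add]
    have c1 : dotProduct h (A.mulVec g) = 0 := hperp _ hAgU
    have c2 : dotProduct g (A.mulVec h) = 0 := by
      rw [hsymm_ip, dotProduct_comm]; exact hperp _ hAgU
    rw [c1, c2]; ring
  -- combinatorial identity
  have hcomb : dotProduct f (A.mulVec f) = 2 * (edIn G S : ℝ) := by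
    have step : ∀ v u : V, f v * (A v u * f u) =
        (if G.Adj v u ∧ v ∈ S ∧ u ∈ S then (1:ℝ) else 0) := by
      intro v u
      by_cases h1 : G.Adj v u <;> by_cases h2 : v ∈ S <;> by_cases h3 : u ∈ S <;>
        simp [hfdef, Set.indicator, hAdef, SimpleGraph.adjMatrix_apply, h1, h2, h3]
    calc dotProduct f (A.mulVec f)
        = ∑ v, ∑ u, f v * (A v u * f u) := by
          simp only [dotProduct, Matrix.mulVec, dotProduct, Finset.mul_sum]
      _ = ∑ v, ∑ u, (if G.Adj v u ∧ v ∈ S ∧ u ∈ S then (1:ℝ) else 0) := by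
          simp only [step]
      _ = ∑ pr : V × V, (if G.Adj pr.1 pr.2 ∧ pr.1 ∈ S ∧ pr.2 ∈ S then (1:ℝ) else 0) := by
          rw [← Finset.sum_product']
          rfl
      _ = ((Finset.univ.filter fun pr : V × V =>
            G.Adj pr.1 pr.2 ∧ pr.1 ∈ S ∧ pr.2 ∈ S).card : ℝ) := by
          rw [Finset.sum_boole]
      _ = 2 * (edIn G S : ℝ) := by
          rw [← twice_edIn G S]; push_cast; ring
  -- spectral bound on h
  have hhh_nonneg : 0 ≤ dotProduct h h :=
    Finset.sum_nonneg fun v _ => mul_self_nonneg _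
  have hAh_bound : μ * dotProduct h h ≤ dotProduct h (A.mulVec h) := by
    have hherm : A.IsHermitian := by
      ext i j; simp [Matrix.conjTranspose_apply, hAdef, SimpleGraph.adj_comm]
    have hTs : (Matrix.toEuclideanLin A).IsSymmetric :=
      Matrix.isHermitian_iff_isSymmetric.mp hherm
    have hrank : Module.finrank ℝ (EuclideanSpace ℝ V) = n := finrank_euclideanSpace
    set b := hTs.eigenvectorBasis hrank with hb
    set lam := hTs.eigenvalues hrank with hlamdef
    set hvec : EuclideanSpace ℝ V := (WithLp.equiv 2 (V → ℝ)).symm h with hvecdef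
    set c : Fin n → ℝ := fun i => inner ℝ hvec (b i) with hc
    have hbridge : ∀ y : EuclideanSpace ℝ V,
        (inner ℝ hvec y : ℝ) = dotProduct h ((WithLp.equiv 2 (V → ℝ)) y) := by
      intro y; rw [inner_bridge]; simp [hvecdef]
    have hc0 : ∀ i, lam i = τ → c i = 0 := by
      intro i hi
      have hmem : b i ∈ Module.End.eigenspace (Matrix.toEuclideanLin A) (lam i) :=
        (hTs.hasEigenvector_eigenvectorBasis hrank i).1
      rw [hi] at hmem
      have hmem2 : (WithLp.equiv 2 (V → ℝ)) (b i) ∈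
          Module.End.eigenspace (Matrix.mulVecLin A) τ :=
        (mem_eig_transfer A τ (b i)).mp hmem
      have hz := hperp _ (Submodule.mem_sup_right hmem2)
      show (inner ℝ hvec (b i) : ℝ) = 0
      rw [hbridge]
      exact hz
    have hlamge : ∀ i, lam i ≠ τ → μ ≤ lam i := fun i hi =>
      hμ2 _ ((hasEig_transfer A _).mp (hTs.hasEigenvalue_eigenvalues hrank i)) hi
    have hThE : dotProduct h (A.mulVec h) = ∑ i, lam i * (c i * c i) := by
      have e1 : (inner ℝ hvec (Matrix.toEuclideanLin A hvec) : ℝ) =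
          dotProduct h (A.mulVec h) := by
        rw [hbridge]; congr 1
      rw [← e1, ← OrthonormalBasis.sum_inner_mul_inner b hvec (Matrix.toEuclideanLin A hvec)]
      apply Finset.sum_congr rfl; intro i _
      have ebc : (inner ℝ hvec (b i) : ℝ) = c i := rfl
      have ecb : (inner ℝ (b i) hvec : ℝ) = c i := by
        rw [← ebc]; exact real_inner_comm _ _
      have e2 : (inner ℝ (b i) (Matrix.toEuclideanLin A hvec) : ℝ) = lam i * c i := by
        rw [← hTs (b i) hvec, hTs.apply_eigenvectorBasis, inner_smul_left, ecb]
        norm_num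
        left; rfl
      rw [e2, ebc]; ring
    have hhh : dotProduct h h = ∑ i, c i * c i := by
      have e1 : (inner ℝ hvec hvec : ℝ) = dotProduct h h := by
        rw [hbridge]; simp [hvecdef]
      rw [← e1, ← OrthonormalBasis.sum_inner_mul_inner b hvec hvec]
      apply Finset.sum_congr rfl; intro i _
      have ebc : (inner ℝ hvec (b i) : ℝ) = c i := rfl
      have ecb : (inner ℝ (b i) hvec : ℝ) = c i := by
        rw [← ebc]; exact real_inner_comm _ _
      rw [ebc, ecb]
    rw [hThE, hhh, Finset.mul_sum]
    apply Finset.sum_le_sum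
    intro i _
    by_cases hi : lam i = τ
    · rw [hc0 i hi]; simp
    · exact mul_le_mul_of_nonneg_right (hlamge i hi) (mul_self_nonneg _)
  -- final arithmetic
  set pp := dotProduct p p with hppdef
  set hh := dotProduct h h with hhhdef
  have E1 : 2 * (edIn G S : ℝ) =
      (k:ℝ) * pp + τ * (dotProduct q q) + dotProduct h (A.mulVec h) := by
    rw [← hcomb, hfAf, hgAg]
  have E4' : (S.ncard:ℝ)^2 / n ≤ pp := (div_le_iff₀ hn0).mpr hCS
  have EA : ((k:ℝ)-τ) * ((S.ncard:ℝ)^2 / n) ≤ ((k:ℝ)-τ) * pp :=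
    mul_le_mul_of_nonneg_left E4' (by linarith)
  have key : ((k:ℝ)-τ) * ((S.ncard:ℝ)^2 / n) + τ * S.ncard + (μ - τ) * hh
      ≤ 2*(edIn G S:ℝ) := by
    rw [E1, hqq]
    linarith [hAh_bound]
  have hvh : vInner h h = (1/(n:ℝ)) * hh := rfl
  have goal_eq : ((k : ℝ) - τ) * (S.ncard : ℝ) ^ 2 / (n : ℝ) ^ 2 +
        τ * (S.ncard : ℝ) / (n : ℝ) - (τ - μ) * vInner h h
      = (((k:ℝ)-τ) * ((S.ncard:ℝ)^2 / n) + τ * S.ncard + (μ - τ) * hh) / n := by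
    rw [hvh]; field_simp; ring
  rw [goal_eq]
  exact (div_le_div_iff_of_pos_right hn0).mpr key


end
end

section
/- Let G = (V,E) be a finite k-regular graph on v vertices with smallest adjacency eigenvalue τ, and assume the Delsarte–Hoffman ratio bound is tight, i.e. α(G) = v/(1 − k/τ). Let S be an independent set of size α(G), let A ⊆ S and B ⊆ V∖S, and set T = (S∖A) ∪ B. Then ed(T) ≥ |B|·(−τ − |A|). -/
set_option linter.unusedVariables false

open scoped Classical

noncomputable section

open Matrix
lemma aux_psd {V : Type*} [Fintype V] [DecidableEq V] (G : SimpleGraph V)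
    [DecidableRel G.Adj] (τ : ℝ)
    (hτmin : ∀ x : ℝ, Module.End.HasEigenvalue (Matrix.mulVecLin (G.adjMatrix ℝ)) x → τ ≤ x) :
    (G.adjMatrix ℝ - τ • (1 : Matrix V V ℝ)).PosSemidef := by
  set M : Matrix V V ℝ := G.adjMatrix ℝ - τ • 1 with hMdef
  have hH : M.IsHermitian := by
    have h1 : (G.adjMatrix ℝ).IsHermitian := by
      rw [Matrix.IsHermitian, Matrix.conjTranspose_eq_transpose_of_trivial]
      exact G.isSymm_adjMatrix
    have h2 : (τ • (1 : Matrix V V ℝ)).IsHermitian := by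
      rw [Matrix.IsHermitian, Matrix.conjTranspose_smul, Matrix.conjTranspose_one]
      simp
    exact h1.sub h2
  apply hH.posSemidef_iff_eigenvalues_nonneg.mpr
  intro i
  set μ := hH.eigenvalues i with hμ
  set w : V → ℝ := ⇑(hH.eigenvectorBasis i) with hw
  have hMw : M *ᵥ w = μ • w := hH.mulVec_eigenvectorBasis i
  have hw0 : w ≠ 0 := by
    have := hH.eigenvectorBasis.orthonormal.ne_zero i
    intro h
    apply this
    ext j
    exact congrFun h j
  have hAw : G.adjMatrix ℝ *ᵥ w = (μ + τ) • w := by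
    have : G.adjMatrix ℝ *ᵥ w - τ • w = μ • w := by
      rw [← hMw, hMdef, Matrix.sub_mulVec, Matrix.smul_mulVec, Matrix.one_mulVec]
    funext j
    have := congrFun this j
    simp only [Pi.sub_apply, Pi.smul_apply, smul_eq_mul] at this ⊢
    linarith
  have : Module.End.HasEigenvalue (Matrix.mulVecLin (G.adjMatrix ℝ)) (μ + τ) := by
    apply Module.End.hasEigenvalue_of_hasEigenvector (x := w)
    constructor
    · rw [Module.End.mem_eigenspace_iff, Matrix.mulVecLin_apply, hAw]
    · exact hw0
  have := hτmin _ this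
  show (0:ℝ) ≤ μ
  linarith

lemma aux_deg {V : Type*} [Fintype V] [DecidableEq V] (G : SimpleGraph V)
    [DecidableRel G.Adj] (k : ℕ) (hreg : ∀ w, G.degree w = k) (τ : ℝ)
    (hτmin : ∀ x : ℝ, Module.End.HasEigenvalue (Matrix.mulVecLin (G.adjMatrix ℝ)) x → τ ≤ x)
    (hn : (Fintype.card V : ℝ) ≠ 0) (S : Set V)
    (hSind : ∀ a ∈ S, ∀ b ∈ S, ¬ G.Adj a b)
    (hak : (S.ncard : ℝ) * k = (S.ncard : ℝ) * τ - (Fintype.card V : ℝ) * τ) :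
    ∀ b ∉ S, ((Finset.filter (· ∈ S) (G.neighborFinset b)).card : ℝ) = -τ := by
  set n : ℝ := (Fintype.card V : ℝ) with hndef
  set a : ℝ := (S.ncard : ℝ) with hadef
  set c : ℝ := a / n with hcdef
  set f : V → ℝ := fun v => (if v ∈ S then (1:ℝ) else 0) - c with hfdef
  set D : V → ℝ := fun v => ((Finset.filter (· ∈ S) (G.neighborFinset v)).card : ℝ) with hDdef
  have hacard : a = (S.toFinset.card : ℝ) := by
    rw [hadef, Set.ncard_eq_toFinset_card']
  have L1 : ∀ v, ((G.adjMatrix ℝ) *ᵥ f) v = D v - k * c := by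
    intro v
    rw [SimpleGraph.adjMatrix_mulVec_apply]
    have : ∑ u ∈ G.neighborFinset v, f u
        = (∑ u ∈ G.neighborFinset v, if u ∈ S then (1:ℝ) else 0)
          - (G.neighborFinset v).card * c := by
      rw [Finset.sum_sub_distrib, Finset.sum_const, nsmul_eq_mul]
    rw [this, Finset.sum_boole]
    have hdeg : ((G.neighborFinset v).card : ℝ) = (k : ℝ) := by
      rw [SimpleGraph.card_neighborFinset_eq_degree, hreg v]
    rw [hdeg, hDdef]
  have L2 : ∀ v ∈ S, D v = 0 := by
    intro v hv
    simp only [hDdef, Nat.cast_eq_zero, Finset.card_eq_zero]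
    rw [Finset.filter_eq_empty_iff]
    intro u hu
    exact fun huS => hSind v hv u huS ((G.mem_neighborFinset v u).1 hu)
  have L3 : ∑ v, D v = k * a := by
    have hstep : ∀ v, D v = ∑ u, if G.Adj v u ∧ u ∈ S then (1:ℝ) else 0 := by
      intro v
      rw [Finset.sum_boole, hDdef]
      norm_num
      congr 1
      rw [SimpleGraph.neighborFinset_eq_filter, Finset.filter_filter]
    have hcol : ∀ u, ∑ v, (if G.Adj v u ∧ u ∈ S then (1:ℝ) else 0)
        = if u ∈ S then (k:ℝ) else 0 := by
      intro u
      by_cases hu : u ∈ S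
      · simp only [hu, and_true, if_true]
        rw [Finset.sum_boole]
        have : Finset.filter (fun v => G.Adj v u) Finset.univ
            = Finset.filter (fun v => G.Adj u v) Finset.univ := by
          apply Finset.filter_congr
          intro v _
          simp [SimpleGraph.adj_comm]
        rw [this]
        have := hreg u
        rw [SimpleGraph.degree] at this
        rw [SimpleGraph.neighborFinset_eq_filter] at this
        rw [this]
      · simp [hu]
    calc ∑ v, D v = ∑ v, ∑ u, if G.Adj v u ∧ u ∈ S then (1:ℝ) else 0 := by
          exact Finset.sum_congr rfl fun v _ => hstep v
      _ = ∑ u, ∑ v, if G.Adj v u ∧ u ∈ S then (1:ℝ) else 0 := Finset.sum_comm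
      _ = ∑ u, if u ∈ S then (k:ℝ) else 0 := Finset.sum_congr rfl fun u _ => hcol u
      _ = k * a := by
          rw [hacard, ← Finset.sum_filter, Finset.sum_const, nsmul_eq_mul,
            Set.filter_mem_univ_eq_toFinset, mul_comm]
  have L4 : ∑ v, f v = 0 := by
    have h1 : ∑ v, (if v ∈ S then (1:ℝ) else 0) = a := by
      rw [Finset.sum_boole, hacard, Set.filter_mem_univ_eq_toFinset]
    rw [hfdef]
    rw [Finset.sum_sub_distrib, h1, Finset.sum_const, nsmul_eq_mul, hcdef]
    field_simp [hn]
    rw [Finset.card_univ, ← hndef]; ring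
  have hff : dotProduct f f = a - a^2/n := by
    have : ∀ v, f v * f v = (if v ∈ S then (1:ℝ) else 0) - 2*c*(if v ∈ S then (1:ℝ) else 0) + c^2 := by
      intro v
      by_cases hv : v ∈ S <;> simp [hfdef, hv] <;> ring
    rw [dotProduct]
    rw [Finset.sum_congr rfl fun v _ => this v]
    rw [Finset.sum_add_distrib, Finset.sum_sub_distrib, Finset.sum_boole,
      Set.filter_mem_univ_eq_toFinset, ← Finset.mul_sum, Finset.sum_boole,
      Set.filter_mem_univ_eq_toFinset, Finset.sum_const, nsmul_eq_mul, ← hacard,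
      Finset.card_univ, ← hndef]
    field_simp [hn]
    linear_combination (a^2*(n*n⁻¹ - 1)) * (mul_inv_cancel₀ hn)
  have hfAf : dotProduct f ((G.adjMatrix ℝ) *ᵥ f) = -(k * a^2 / n) := by
    have h1 : dotProduct f ((G.adjMatrix ℝ) *ᵥ f) = ∑ v, f v * (D v - k*c) := by
      rw [dotProduct]
      exact Finset.sum_congr rfl fun v _ => by rw [L1 v]
    have h2 : ∀ v, f v * (D v - k*c) = f v * D v - k*c*(f v) := by intro v; ring
    rw [h1, Finset.sum_congr rfl fun v _ => h2 v, Finset.sum_sub_distrib, ← Finset.mul_sum, L4,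
      mul_zero, sub_zero]
    have h3 : ∀ v, f v * D v = -(c * D v) + (if v ∈ S then (1:ℝ) else 0) * D v := by
      intro v
      have hfv : f v = (if v ∈ S then (1:ℝ) else 0) - c := rfl
      rw [hfv]; ring
    have h4 : ∀ v, (if v ∈ S then (1:ℝ) else 0) * D v = 0 := by
      intro v
      by_cases hv : v ∈ S
      · simp [hv, L2 v hv]
      · simp [hv]
    rw [Finset.sum_congr rfl fun v _ => h3 v, Finset.sum_add_distrib,
      Finset.sum_congr rfl fun v _ => h4 v, Finset.sum_const, smul_zero, add_zero,
      Finset.sum_neg_distrib, ← Finset.mul_sum, L3, hcdef]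
    field_simp [hn]
  have hpsd := aux_psd G τ hτmin
  set M : Matrix V V ℝ := G.adjMatrix ℝ - τ • 1 with hMdef
  have hMf' : M *ᵥ f = (G.adjMatrix ℝ) *ᵥ f - τ • f := by
    rw [hMdef, Matrix.sub_mulVec, Matrix.smul_mulVec, Matrix.one_mulVec]
  have hquad : dotProduct f (M *ᵥ f) = 0 := by
    rw [hMf', dotProduct_sub, dotProduct_smul, hfAf, hff]
    simp only [smul_eq_mul]
    field_simp [hn]
    linear_combination (-a) * hak
  have hMf : M *ᵥ f = 0 := by
    apply (hpsd.dotProduct_mulVec_zero_iff f).1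
    simpa using hquad
  have hAf : (G.adjMatrix ℝ) *ᵥ f = τ • f := by
    have : (G.adjMatrix ℝ) *ᵥ f - τ • f = 0 := by rw [← hMf', hMf]
    funext v
    have := congrFun this v
    simp only [Pi.sub_apply, Pi.zero_apply, Pi.smul_apply, smul_eq_mul] at this ⊢
    linarith
  intro b hb
  have h1 := L1 b
  have h2 : ((G.adjMatrix ℝ) *ᵥ f) b = τ * f b := by rw [hAf]; simp
  have h3 : f b = -c := by simp [hfdef, hb]
  rw [h2, h3] at h1
  have h4 : D b = k * c - τ * c := by linarith
  show D b = -τ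
  rw [h4, hcdef]
  field_simp [hn]
  linear_combination hak

/-- Consequence of tightness in the Delsarte–Hoffman ratio bound: if `α(G) = v/(1-k/τ)`,
`S` is a maximum independent set, `A ⊆ S`, `B ⊆ V∖S` and `T = (S∖A) ∪ B`, then
`ed(T) ≥ |B|(-τ-|A|)`. -/
theorem stmt5 {V : Type*} [Fintype V] [DecidableEq V] (G : SimpleGraph V)
    [DecidableRel G.Adj] (k : ℕ) (hreg : ∀ w, G.degree w = k) (τ : ℝ)
    (hτev : Module.End.HasEigenvalue (Matrix.mulVecLin (G.adjMatrix ℝ)) τ)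
    (hτmin : ∀ x : ℝ, Module.End.HasEigenvalue (Matrix.mulVecLin (G.adjMatrix ℝ)) x → τ ≤ x)
    (htight : (indepNum G : ℝ) = (Fintype.card V : ℝ) / (1 - (k : ℝ) / τ))
    (S : Set V) (hSind : IsIndepSet G S) (hScard : S.ncard = indepNum G)
    (A B : Set V) (hA : A ⊆ S) (hB : B ⊆ Sᶜ) :
    (B.ncard : ℝ) * (-τ - (A.ncard : ℝ)) ≤ (edIn G ((S \ A) ∪ B) : ℝ) := by
  have hSind' : ∀ a ∈ S, ∀ b ∈ S, ¬ G.Adj a b := hSind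
  by_cases hcase : -τ - (A.ncard : ℝ) ≤ 0
  · have h1 : (B.ncard : ℝ) * (-τ - (A.ncard : ℝ)) ≤ 0 :=
      mul_nonpos_of_nonneg_of_nonpos (Nat.cast_nonneg _) hcase
    exact h1.trans (Nat.cast_nonneg _)
  push_neg at hcase
  have hτneg : τ < 0 := by
    have h0 : (0:ℝ) ≤ (A.ncard : ℝ) := Nat.cast_nonneg _
    linarith
  by_cases hV : Fintype.card V = 0
  · have : IsEmpty V := Fintype.card_eq_zero_iff.mp hV
    have hBe : B = ∅ := Set.eq_empty_of_isEmpty B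
    rw [hBe]
    simp only [Set.ncard_empty, Nat.cast_zero, zero_mul]
    exact Nat.cast_nonneg _
  have hn : (Fintype.card V : ℝ) ≠ 0 := Nat.cast_ne_zero.mpr hV
  have htight' : (S.ncard : ℝ) = (Fintype.card V : ℝ) / (1 - (k : ℝ) / τ) := by
    rw [hScard]; exact htight
  have hd : (0:ℝ) < 1 - (k:ℝ)/τ := by
    have hkτ : (k:ℝ)/τ ≤ 0 := div_nonpos_of_nonneg_of_nonpos (Nat.cast_nonneg _) hτneg.le
    linarith
  have h2 : (S.ncard:ℝ) * (1 - (k:ℝ)/τ) = (Fintype.card V : ℝ) :=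
    (eq_div_iff hd.ne').mp htight'
  have hτ0 : τ ≠ 0 := ne_of_lt hτneg
  have hak : (S.ncard : ℝ) * k = (S.ncard : ℝ) * τ - (Fintype.card V : ℝ) * τ := by
    field_simp at h2
    linear_combination -h2
  have hdeg := aux_deg G k hreg τ hτmin hn S hSind' hak
  show (B.ncard : ℝ) * (-τ - (A.ncard : ℝ)) ≤
      (Nat.card {e : Sym2 V // e ∈ G.edgeSet ∧ ∀ v ∈ e, v ∈ (S \ A) ∪ B} : ℝ)

  set T : Set V := (S \ A) ∪ B with hT
  set Bf : Finset V := B.toFinset with hBf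
  set Df : V → Finset V := fun b => Finset.filter (· ∈ S \ A) (G.neighborFinset b) with hDf
  set EF : Finset (Sym2 V) :=
    Finset.filter (fun e => e ∈ G.edgeSet ∧ ∀ v ∈ e, v ∈ T) Finset.univ with hEF
  have hedIn : (Nat.card {e : Sym2 V // e ∈ G.edgeSet ∧ ∀ v ∈ e, v ∈ T} : ℕ) = EF.card := by
    rw [Nat.card_eq_fintype_card]
    convert Fintype.card_subtype _
  set Ee : V → Finset (Sym2 V) := fun b => (Df b).image (fun s => s(b, s)) with hEe
  have hEecard : ∀ b, (Ee b).card = (Df b).card := by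
    intro b
    apply Finset.card_image_of_injOn
    intro s _ s' _ h
    exact Sym2.congr_right.1 h
  have hnotS : ∀ b ∈ Bf, b ∉ S := by
    intro b hb
    exact hB (Set.mem_toFinset.1 hb)
  have hsub : ∀ b ∈ Bf, Ee b ⊆ EF := by
    intro b hb e he
    rw [hEe] at he
    simp only [Finset.mem_image] at he
    obtain ⟨s, hs, rfl⟩ := he
    rw [hDf] at hs
    simp only [Finset.mem_filter, SimpleGraph.mem_neighborFinset] at hs
    rw [hEF]
    simp only [Finset.mem_filter, Finset.mem_univ, true_and]
    refine ⟨hs.1, ?_⟩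
    intro v hv
    rw [Sym2.mem_iff] at hv
    rcases hv with rfl | rfl
    · exact Or.inr (Set.mem_toFinset.1 hb)
    · exact Or.inl hs.2
  have hdisj : ∀ b ∈ Bf, ∀ b' ∈ Bf, b ≠ b' → Disjoint (Ee b) (Ee b') := by
    intro b hb b' hb' hne
    rw [Finset.disjoint_left]
    intro e he he'
    simp only [hEe, Finset.mem_image] at he he'
    obtain ⟨s, hs, rfl⟩ := he
    obtain ⟨s', hs', heq⟩ := he'
    rw [hDf] at hs hs'
    simp only [Finset.mem_filter, SimpleGraph.mem_neighborFinset] at hs hs'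
    rw [Sym2.eq_iff] at heq
    rcases heq with ⟨h1, h2⟩ | ⟨h1, h2⟩
    · exact hne h1.symm
    · apply hnotS b' hb'
      rw [h1]
      exact hs.2.1
  have hsum : ∑ b ∈ Bf, (Df b).card ≤ EF.card := by
    rw [← Finset.sum_congr rfl fun b _ => hEecard b, ← Finset.card_biUnion hdisj]
    apply Finset.card_le_card
    intro e he
    rw [Finset.mem_biUnion] at he
    obtain ⟨b, hb, hbe⟩ := he
    exact hsub b hb hbe
  have hlow : ∀ b ∈ Bf, -τ - (A.ncard : ℝ) ≤ ((Df b).card : ℝ) := by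
    intro b hb
    have hbS := hnotS b hb
    have h1 := hdeg b hbS
    have h2 : (Finset.filter (· ∈ S) (G.neighborFinset b)).card
        ≤ (Df b).card + A.toFinset.card := by
      calc (Finset.filter (· ∈ S) (G.neighborFinset b)).card
          ≤ (Df b ∪ A.toFinset).card := by
            apply Finset.card_le_card
            intro u hu
            simp only [Finset.mem_filter] at hu
            rw [Finset.mem_union]
            by_cases huA : u ∈ A
            · exact Or.inr (Set.mem_toFinset.2 huA)
            · exact Or.inl (by
                rw [hDf]
                simp only [Finset.mem_filter]
                exact ⟨hu.1, hu.2, huA⟩)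
        _ ≤ (Df b).card + A.toFinset.card := Finset.card_union_le _ _
    have h3 : (A.ncard : ℝ) = (A.toFinset.card : ℝ) := by
      rw [Set.ncard_eq_toFinset_card']
    have h4 : ((Finset.filter (· ∈ S) (G.neighborFinset b)).card : ℝ)
        ≤ ((Df b).card : ℝ) + (A.toFinset.card : ℝ) := by exact_mod_cast h2
    rw [h1] at h4
    linarith
  calc (B.ncard : ℝ) * (-τ - (A.ncard : ℝ))
      = ∑ _b ∈ Bf, (-τ - (A.ncard : ℝ)) := by
        rw [Finset.sum_const, nsmul_eq_mul, hBf, Set.ncard_eq_toFinset_card']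
    _ ≤ ∑ b ∈ Bf, ((Df b).card : ℝ) := Finset.sum_le_sum hlow
    _ = ((∑ b ∈ Bf, (Df b).card : ℕ) : ℝ) := by push_cast; ring
    _ ≤ (EF.card : ℝ) := by exact_mod_cast hsum
    _ = _ := by rw [← hedIn]


end
end

section
/- E[h²] = ((2n−2)/((2n−1)(2n−3))) · Σ_{e ∈ E(K_{2n})} b_e². -/
set_option linter.unusedVariables false

open scoped Classical

noncomputable section

/-- The edges of `K_{2n}`: non-diagonal elements of `Sym2 (Fin (2n))`. -/
noncomputable def pmEdges (n : ℕ) : Finset (Sym2 (Fin (2 * n))) :=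
  Finset.univ.filter fun e => ¬e.IsDiag

/-- Expectation of a function on perfect matchings: `E[φ] = (1/(2n-1)!!) Σ_P φ(P)`. -/
noncomputable def pmExp (n : ℕ) (φ : PMatching n → ℝ) : ℝ :=
  (1 / (Nat.doubleFactorial (2 * n - 1) : ℝ)) * ∑ m, φ m

/-- The inner product `⟨f,g⟩ = (1/(2n-1)!!) Σ_P f(P)g(P)` on functions on matchings. -/
noncomputable def pmInner (n : ℕ) (f g : PMatching n → ℝ) : ℝ :=
  (1 / (Nat.doubleFactorial (2 * n - 1) : ℝ)) * ∑ m, f m * g m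

/-- `U`: the linear span of the indicator vectors of the stars of `M_n`. -/
noncomputable def starSpan (n : ℕ) : Submodule ℝ (PMatching n → ℝ) :=
  Submodule.span ℝ
    {f | ∃ e : Sym2 (Fin (2 * n)), ¬e.IsDiag ∧ f = Set.indicator (pmStar n e) 1}

/-- `a_e = |A ∩ S_e|/(2n-3)!!`. -/
noncomputable def aCoe (n : ℕ) (A : Set (PMatching n)) (e : Sym2 (Fin (2 * n))) : ℝ :=
  ((A ∩ pmStar n e).ncard : ℝ) / (Nat.doubleFactorial (2 * n - 3) : ℝ)

/-- `b_e = a_e - c/(2n-1)`. -/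
noncomputable def bCoe (n : ℕ) (A : Set (PMatching n)) (c : ℝ)
    (e : Sym2 (Fin (2 * n))) : ℝ :=
  aCoe n A e - c / (2 * (n : ℝ) - 1)

/-- `g = Σ_e a_e · 1_{S_e}`. -/
noncomputable def gFun (n : ℕ) (A : Set (PMatching n)) : PMatching n → ℝ :=
  fun m => ∑ e ∈ pmEdges n, aCoe n A e * Set.indicator (pmStar n e) 1 m

/-- `h = Σ_e b_e · 1_{S_e}`. -/
noncomputable def hFun (n : ℕ) (A : Set (PMatching n)) (c : ℝ) : PMatching n → ℝ :=
  fun m => ∑ e ∈ pmEdges n, bCoe n A c e * Set.indicator (pmStar n e) 1 m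


set_option linter.unusedSectionVars false
open scoped Nat
section Aux


abbrev FPF (α : Type) :=
  {f : Equiv.Perm α // (∀ x, f (f x) = x) ∧ ∀ x, f x ≠ x}

variable {α : Type} [DecidableEq α]

def resFun (x y : α) (f : {f : FPF α // f.1 x = y})
    (z : {z : α // z ≠ x ∧ z ≠ y}) : {z : α // z ≠ x ∧ z ≠ y} := by
  refine ⟨f.1.1 (z : α), fun h => z.2.2 ?_, fun h => z.2.1 ?_⟩
  · calc (z : α) = f.1.1 (f.1.1 z) := (f.1.2.1 _).symm
      _ = f.1.1 x := by rw [h]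
      _ = y := f.2
  · calc (z : α) = f.1.1 (f.1.1 z) := (f.1.2.1 _).symm
      _ = f.1.1 y := by rw [h]
      _ = f.1.1 (f.1.1 x) := by rw [f.2]
      _ = x := f.1.2.1 x

lemma resFun_invol (x y : α) (f : {f : FPF α // f.1 x = y}) :
    Function.Involutive (resFun x y f) := fun z => Subtype.ext (f.1.2.1 (z : α))

def extFun (x y : α) (g : Equiv.Perm {z : α // z ≠ x ∧ z ≠ y}) (z : α) : α :=
  if hw : z = x then y else if hw' : z = y then x else (g ⟨z, hw, hw'⟩ : α)

lemma extFun_left (x y : α) (g : Equiv.Perm {z : α // z ≠ x ∧ z ≠ y}) :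
    extFun x y g x = y := by simp [extFun]

lemma extFun_right (x y : α) (hxy : x ≠ y) (g : Equiv.Perm {z : α // z ≠ x ∧ z ≠ y}) :
    extFun x y g y = x := by simp [extFun, hxy.symm]

lemma extFun_of (x y : α) (g : Equiv.Perm {z : α // z ≠ x ∧ z ≠ y}) (z : α)
    (hz : z ≠ x) (hz' : z ≠ y) : extFun x y g z = (g ⟨z, hz, hz'⟩ : α) := by
  simp [extFun, hz, hz']

lemma extFun_invol (x y : α) (hxy : x ≠ y) (g : FPF {z : α // z ≠ x ∧ z ≠ y}) :
    Function.Involutive (extFun x y g.1) := by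
  intro z
  by_cases hz : z = x
  · subst hz; rw [extFun_left, extFun_right _ _ hxy]
  · by_cases hz' : z = y
    · subst hz'; rw [extFun_right _ _ hxy, extFun_left]
    · rw [extFun_of x y g.1 z hz hz',
        extFun_of x y g.1 _ (g.1 ⟨z, hz, hz'⟩).2.1 (g.1 ⟨z, hz, hz'⟩).2.2]
      exact congrArg Subtype.val (g.2.1 ⟨z, hz, hz'⟩)

/-- Restriction/extension equivalence for the star of an edge. -/
def starEquiv (x y : α) (hxy : x ≠ y) :
    {f : FPF α // f.1 x = y} ≃ FPF {z : α // z ≠ x ∧ z ≠ y} where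
  toFun f :=
    ⟨(resFun_invol x y f).toPerm,
      fun z => resFun_invol x y f z,
      fun z h => f.1.2.2 (z : α) (congrArg Subtype.val h)⟩
  invFun g := by
    refine ⟨⟨(extFun_invol x y hxy g).toPerm, fun z => extFun_invol x y hxy g z, ?_⟩, ?_⟩
    · intro z h
      simp only [Function.Involutive.coe_toPerm] at h
      by_cases hz : z = x
      · subst hz; rw [extFun_left] at h; exact hxy h.symm
      · by_cases hz' : z = y
        · subst hz'; rw [extFun_right _ _ hxy] at h; exact hxy h
        · rw [extFun_of x y g.1 z hz hz'] at h
          exact g.2.2 ⟨z, hz, hz'⟩ (Subtype.ext h)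
    · show extFun x y g.1 x = y
      exact extFun_left x y g.1
  left_inv f := by
    apply Subtype.ext; apply Subtype.ext; apply Equiv.ext
    intro z
    simp only [Function.Involutive.coe_toPerm]
    by_cases hz : z = x
    · subst hz; rw [extFun_left]; exact f.2.symm
    · by_cases hz' : z = y
      · rw [hz', extFun_right _ _ hxy]
        calc x = f.1.1 (f.1.1 x) := (f.1.2.1 x).symm
          _ = f.1.1 y := by rw [f.2]
      · rw [extFun_of _ _ _ z hz hz']; rfl
  right_inv g := by
    apply Subtype.ext; apply Equiv.ext
    intro z
    apply Subtype.ext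
    show extFun x y _ (z : α) = _
    rw [extFun_of _ _ _ _ z.2.1 z.2.2]


variable {α : Type} [Fintype α] [DecidableEq α]

lemma card_compl_two (x y : α) (hxy : x ≠ y) :
    Fintype.card {z : α // z ≠ x ∧ z ≠ y} = Fintype.card α - 2 := by
  rw [Fintype.card_subtype]
  have h : (Finset.univ.filter fun z : α => z ≠ x ∧ z ≠ y) =
      (Finset.univ.erase y).erase x := by
    ext z; simp [and_comm]
  rw [h, Finset.card_erase_of_mem, Finset.card_erase_of_mem (Finset.mem_univ y)]
  · rfl
  · exact Finset.mem_erase.mpr ⟨hxy, Finset.mem_univ x⟩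

lemma dF_odd_rec (m : ℕ) : (2 * m + 1)‼ = (2 * m + 1) * (2 * m - 1)‼ := by
  cases m with
  | zero => rfl
  | succ k =>
    have h1 : 2 * (k + 1) + 1 = (2 * k + 1) + 2 := by ring
    have h2 : 2 * (k + 1) - 1 = 2 * k + 1 := by omega
    rw [h1, h2, Nat.doubleFactorial_add_two]

lemma fpf_card : ∀ (m : ℕ) (α : Type) [Fintype α] [DecidableEq α],
    Fintype.card α = 2 * m → Nat.card (FPF α) = (2 * m - 1)‼ := by
  intro m
  induction m with
  | zero =>
    intro α _ _ h
    haveI : IsEmpty α := Fintype.card_eq_zero_iff.mp h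
    haveI : Unique (FPF α) :=
      { default := ⟨1, fun z => isEmptyElim z, fun z => isEmptyElim z⟩
        uniq := fun f => Subtype.ext (Equiv.ext fun z => isEmptyElim z) }
    simp [Nat.card_unique]
  | succ k ih =>
    intro α _ _ h
    have hx : ∃ x : α, True := by
      have : 0 < Fintype.card α := by omega
      obtain ⟨x⟩ := Fintype.card_pos_iff.mp this
      exact ⟨x, trivial⟩
    obtain ⟨x, -⟩ := hx
    have hsplit : Nat.card (FPF α) =
        ∑ y ∈ Finset.univ.erase x, Nat.card {f : FPF α // f.1 x = y} := by
      rw [Nat.card_eq_fintype_card, ← Finset.card_univ,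
        Finset.card_eq_sum_card_fiberwise
          (f := fun f : FPF α => f.1 x) (t := Finset.univ) (fun f _ => Finset.mem_univ _)]
      rw [← Finset.add_sum_erase _ _ (Finset.mem_univ x)]
      have h0 : (Finset.univ.filter fun f : FPF α => f.1 x = x) = ∅ := by
        apply Finset.filter_eq_empty_iff.mpr
        intro f _
        exact f.2.2 x
      rw [h0]
      simp only [Finset.card_empty, zero_add]
      refine Finset.sum_congr rfl fun y _ => ?_
      rw [Nat.card_eq_fintype_card, Fintype.card_subtype]
    rw [hsplit]
    have hterm : ∀ y ∈ Finset.univ.erase x,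
        Nat.card {f : FPF α // f.1 x = y} = (2 * k - 1)‼ := by
      intro y hy
      have hxy : x ≠ y := (Finset.mem_erase.mp hy).1.symm
      rw [Nat.card_congr (starEquiv x y hxy)]
      exact ih _ (by rw [card_compl_two x y hxy, h]; omega)
    rw [Finset.sum_congr rfl hterm, Finset.sum_const, Finset.card_erase_of_mem (Finset.mem_univ x),
      Finset.card_univ, h]
    have : 2 * (k + 1) - 1 = 2 * k + 1 := by omega
    rw [this, dF_odd_rec, smul_eq_mul]

lemma fpf_star_card (m : ℕ) (h : Fintype.card α = 2 * m) (x y : α) (hxy : x ≠ y) :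
    Nat.card {f : FPF α // f.1 x = y} = (2 * m - 3)‼ := by
  have hm : 1 ≤ m := by
    have : 0 < Fintype.card α := Fintype.card_pos_iff.mpr ⟨x⟩
    omega
  rw [Nat.card_congr (starEquiv x y hxy),
    fpf_card (m - 1) _ (by rw [card_compl_two x y hxy, h]; omega)]
  congr 1; omega

lemma fpf_star2_card (m : ℕ) (h : Fintype.card α = 2 * m) (x y u v : α)
    (hxy : x ≠ y) (huv : u ≠ v) (hux : u ≠ x) (huy : u ≠ y) (hvx : v ≠ x) (hvy : v ≠ y) :
    Nat.card {f : FPF α // f.1 x = y ∧ f.1 u = v} = (2 * m - 5)‼ := by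
  have e1 : {f : FPF α // f.1 x = y ∧ f.1 u = v} ≃
      {g : FPF {z : α // z ≠ x ∧ z ≠ y} // g.1 ⟨u, hux, huy⟩ = ⟨v, hvx, hvy⟩} := by
    refine ((Equiv.subtypeSubtypeEquivSubtypeInter _ _).symm).trans
      ((starEquiv x y hxy).subtypeEquiv fun p => ?_)
    constructor
    · intro hp; exact Subtype.ext hp
    · intro hp; exact congrArg Subtype.val hp
  rw [Nat.card_congr e1,
    fpf_star_card (m - 1) (by rw [card_compl_two x y hxy, h]; omega) _ _
      (fun hc => huv (congrArg Subtype.val hc))]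
  congr 1; omega


lemma pmStar_eq {n : ℕ} {a b : Fin (2 * n)} (hab : a ≠ b) :
    pmStar n s(a, b) = {m : PMatching n | m.1 a = b} := by
  ext m
  constructor
  · rintro ⟨z, hz⟩
    rcases Sym2.eq_iff.mp hz with ⟨rfl, hb⟩ | ⟨ha, rfl⟩
    · exact hb.symm
    · show m.1 a = b
      rw [ha, m.2.1]
  · intro h
    exact ⟨a, by rw [h]⟩

lemma sum_indicator_eq_ncard {n : ℕ} (s : Set (PMatching n)) :
    ∑ m : PMatching n, Set.indicator s (1 : PMatching n → ℝ) m = (s.ncard : ℝ) := by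
  classical
  have : ∑ m : PMatching n, Set.indicator s (1 : PMatching n → ℝ) m
      = ∑ m : PMatching n, if m ∈ s then (1 : ℝ) else 0 := by
    refine Finset.sum_congr rfl fun m _ => ?_
    simp [Set.indicator_apply]
  rw [this, Finset.sum_boole, Set.ncard_eq_toFinset_card' s,
    Set.filter_mem_univ_eq_toFinset]

lemma pmStar_ncard {n : ℕ} {a b : Fin (2 * n)} (hab : a ≠ b) :
    (pmStar n s(a, b)).ncard = Nat.doubleFactorial (2 * n - 3) := by
  rw [pmStar_eq hab, ← Nat.card_coe_set_eq]
  have : Nat.card {m : PMatching n // m.1 a = b} = Nat.doubleFactorial (2 * n - 3) := by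
    rw [fpf_star_card n (by simp) a b hab]
  exact this

lemma pmStar_inter_ncard {n : ℕ} {a b u v : Fin (2 * n)} (hab : a ≠ b) (huv : u ≠ v)
    (hua : u ≠ a) (hub : u ≠ b) (hva : v ≠ a) (hvb : v ≠ b) :
    (pmStar n s(a, b) ∩ pmStar n s(u, v)).ncard = Nat.doubleFactorial (2 * n - 5) := by
  rw [pmStar_eq hab, pmStar_eq huv, ← Nat.card_coe_set_eq]
  have h1 : ({m : PMatching n | m.1 a = b} ∩ {m : PMatching n | m.1 u = v})
      = {m : PMatching n | m.1 a = b ∧ m.1 u = v} := rfl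
  rw [h1]
  have : Nat.card {m : PMatching n // m.1 a = b ∧ m.1 u = v}
      = Nat.doubleFactorial (2 * n - 5) := by
    rw [fpf_star2_card n (by simp) a b u v hab huv hua hub hva hvb]
  exact this

lemma star_rep {n : ℕ} {e : Sym2 (Fin (2 * n))} {m : PMatching n} {w : Fin (2 * n)}
    (hm : m ∈ pmStar n e) (hw : w ∈ e) : e = s(w, m.1 w) := by
  obtain ⟨z, rfl⟩ := hm
  rcases Sym2.mem_iff.mp hw with rfl | rfl
  · rfl
  · rw [m.2.1 z, Sym2.eq_swap]

lemma pmStar_inter_empty {n : ℕ} {e f : Sym2 (Fin (2 * n))} (hef : e ≠ f)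
    {w : Fin (2 * n)} (hwe : w ∈ e) (hwf : w ∈ f) :
    pmStar n e ∩ pmStar n f = ∅ := by
  ext m
  simp only [Set.mem_inter_iff, Set.mem_empty_iff_false, iff_false, not_and]
  intro he hf
  exact hef ((star_rep he hwe).trans (star_rep hf hwf).symm)

lemma mem_pmEdges {n : ℕ} {f : Sym2 (Fin (2 * n))} :
    f ∈ pmEdges n ↔ ¬f.IsDiag := by
  simp [pmEdges]

lemma vertex_filter_card {n : ℕ} (w : Fin (2 * n)) :
    ((pmEdges n).filter fun f => w ∈ f).card = 2 * n - 1 := by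
  classical
  have himg : ((Finset.univ.erase w).image fun y => s(w, y)) =
      (pmEdges n).filter fun f => w ∈ f := by
    ext f
    simp only [Finset.mem_image, Finset.mem_erase, Finset.mem_filter, Finset.mem_univ,
      true_and, mem_pmEdges, and_true]
    constructor
    · rintro ⟨y, hy, rfl⟩
      exact ⟨fun hd => hy (Sym2.mk_isDiag_iff.mp hd).symm, Sym2.mem_mk_left w y⟩
    · rintro ⟨hnd, hwf⟩
      refine ⟨Sym2.Mem.other hwf, fun h => hnd ?_, Sym2.other_spec hwf⟩
      rw [← Sym2.other_spec hwf, h]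
      exact Sym2.mk_isDiag_iff.mpr rfl
  rw [← himg, Finset.card_image_of_injOn (fun y _ z _ h => Sym2.congr_right.mp h),
    Finset.card_erase_of_mem (Finset.mem_univ w), Finset.card_univ]
  simp

lemma vertex_star_unique {n : ℕ} (w : Fin (2 * n)) (m : PMatching n) :
    ((pmEdges n).filter fun f => w ∈ f ∧ m ∈ pmStar n f) = {s(w, m.1 w)} := by
  ext f
  simp only [Finset.mem_filter, Finset.mem_singleton, mem_pmEdges]
  constructor
  · rintro ⟨hnd, hwf, hms⟩
    exact star_rep hms hwf
  · rintro rfl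
    exact ⟨fun hd => m.2.2 w (Sym2.mk_isDiag_iff.mp hd).symm,
      Sym2.mem_mk_left _ _, ⟨w, rfl⟩⟩

lemma ncard_eq_filter_card {n : ℕ} (s : Set (PMatching n)) :
    s.ncard = (Finset.univ.filter fun m => m ∈ s).card := by
  rw [Set.ncard_eq_toFinset_card' s, Set.filter_mem_univ_eq_toFinset]

lemma vertex_ncard_sum {n : ℕ} (w : Fin (2 * n)) (A : Set (PMatching n)) :
    ∑ f ∈ (pmEdges n).filter (fun f => w ∈ f), (A ∩ pmStar n f).ncard = A.ncard := by
  classical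
  have key : ∀ f, (A ∩ pmStar n f).ncard =
      ∑ m : PMatching n, if m ∈ A ∧ m ∈ pmStar n f then 1 else 0 := by
    intro f
    rw [ncard_eq_filter_card, Finset.card_filter]
    exact Finset.sum_congr rfl fun m _ => by simp [Set.mem_inter_iff]
  rw [Finset.sum_congr rfl fun f _ => key f, Finset.sum_comm]
  have h2 : ∀ m : PMatching n,
      (∑ f ∈ (pmEdges n).filter (fun f => w ∈ f), if m ∈ A ∧ m ∈ pmStar n f then 1 else 0)
        = if m ∈ A then 1 else 0 := by
    intro m
    by_cases hm : m ∈ A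
    · simp only [hm, true_and, if_true]
      rw [← Finset.card_filter, Finset.filter_filter, vertex_star_unique w m,
        Finset.card_singleton]
    · simp [hm]
  rw [Finset.sum_congr rfl fun m _ => h2 m, ← Finset.card_filter, ← ncard_eq_filter_card]

lemma edge_vertex_card {n : ℕ} {f : Sym2 (Fin (2 * n))} (hf : ¬f.IsDiag) :
    (Finset.univ.filter fun w : Fin (2 * n) => w ∈ f).card = 2 := by
  classical
  induction f with
  | _ a b =>
    have hab : a ≠ b := fun h => hf (Sym2.mk_isDiag_iff.mpr h)
    have : (Finset.univ.filter fun w : Fin (2 * n) => w ∈ s(a, b)) = {a, b} := by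
      ext w; simp [Sym2.mem_iff]
    rw [this, Finset.card_pair hab]

lemma dF_cast_ne {k : ℕ} : ((Nat.doubleFactorial k : ℕ) : ℝ) ≠ 0 :=
  Nat.cast_ne_zero.mpr (Nat.doubleFactorial_pos _).ne'

lemma sum_aCoe_vertex {n : ℕ} (hn : 3 ≤ n) (A : Set (PMatching n)) (c : ℝ)
    (hA : (A.ncard : ℝ) = c * (Nat.doubleFactorial (2 * n - 3) : ℝ)) (w : Fin (2 * n)) :
    ∑ f ∈ (pmEdges n).filter (fun f => w ∈ f), aCoe n A f = c := by
  unfold aCoe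
  rw [← Finset.sum_div, ← Nat.cast_sum, vertex_ncard_sum w A, hA,
    mul_div_cancel_right₀ _ dF_cast_ne]

lemma sum_bCoe_vertex {n : ℕ} (hn : 3 ≤ n) (A : Set (PMatching n)) (c : ℝ)
    (hA : (A.ncard : ℝ) = c * (Nat.doubleFactorial (2 * n - 3) : ℝ)) (w : Fin (2 * n)) :
    ∑ f ∈ (pmEdges n).filter (fun f => w ∈ f), bCoe n A c f = 0 := by
  have hx : (3 : ℝ) ≤ (n : ℝ) := by exact_mod_cast hn
  have hne : 2 * (n : ℝ) - 1 ≠ 0 := by nlinarith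
  unfold bCoe
  rw [Finset.sum_sub_distrib, sum_aCoe_vertex hn A c hA w, Finset.sum_const,
    vertex_filter_card w, nsmul_eq_mul]
  have hcast : ((2 * n - 1 : ℕ) : ℝ) = 2 * (n : ℝ) - 1 := by
    have h1 : 1 ≤ 2 * n := by omega
    push_cast [Nat.cast_sub h1]
    ring
  rw [hcast, mul_div_cancel₀ _ hne, sub_self]

lemma sum_bCoe_total {n : ℕ} (hn : 3 ≤ n) (A : Set (PMatching n)) (c : ℝ)
    (hA : (A.ncard : ℝ) = c * (Nat.doubleFactorial (2 * n - 3) : ℝ)) :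
    ∑ f ∈ pmEdges n, bCoe n A c f = 0 := by
  classical
  have hz : ∑ w : Fin (2 * n), ∑ f ∈ (pmEdges n).filter (fun f => w ∈ f), bCoe n A c f
      = 0 := Finset.sum_eq_zero fun w _ => sum_bCoe_vertex hn A c hA w
  have hswap : ∑ w : Fin (2 * n), ∑ f ∈ (pmEdges n).filter (fun f => w ∈ f), bCoe n A c f
      = ∑ f ∈ pmEdges n, 2 * bCoe n A c f := by
    have h1 : ∀ w : Fin (2 * n),
        (∑ f ∈ (pmEdges n).filter (fun f => w ∈ f), bCoe n A c f)
          = ∑ f ∈ pmEdges n, if w ∈ f then bCoe n A c f else 0 :=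
      fun w => Finset.sum_filter _ _
    rw [Finset.sum_congr rfl fun w _ => h1 w, Finset.sum_comm]
    refine Finset.sum_congr rfl fun f hf => ?_
    rw [← Finset.sum_filter, Finset.sum_const,
      edge_vertex_card (mem_pmEdges.mp hf), nsmul_eq_mul]
    norm_num
  rw [hswap, ← Finset.mul_sum] at hz
  linarith

lemma sum_bCoe_disjoint {n : ℕ} (hn : 3 ≤ n) (A : Set (PMatching n)) (c : ℝ)
    (hA : (A.ncard : ℝ) = c * (Nat.doubleFactorial (2 * n - 3) : ℝ))
    {a b : Fin (2 * n)} (hab : a ≠ b) :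
    ∑ f ∈ ((pmEdges n).filter (fun f => ¬ a ∈ f)).filter (fun f => ¬ b ∈ f),
      bCoe n A c f = bCoe n A c s(a, b) := by
  classical
  set F := bCoe n A c with hF
  have A1 : ∑ f ∈ pmEdges n, F f
      = (∑ f ∈ (pmEdges n).filter (fun f => a ∈ f), F f)
        + ∑ f ∈ (pmEdges n).filter (fun f => ¬ a ∈ f), F f :=
    (Finset.sum_filter_add_sum_filter_not _ _ _).symm
  have A2 : ∑ f ∈ (pmEdges n).filter (fun f => ¬ a ∈ f), F f
      = (∑ f ∈ ((pmEdges n).filter (fun f => ¬ a ∈ f)).filter (fun f => b ∈ f), F f)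
        + ∑ f ∈ ((pmEdges n).filter (fun f => ¬ a ∈ f)).filter (fun f => ¬ b ∈ f), F f :=
    (Finset.sum_filter_add_sum_filter_not _ _ _).symm
  have A3 : ∑ f ∈ (pmEdges n).filter (fun f => b ∈ f), F f
      = (∑ f ∈ ((pmEdges n).filter (fun f => b ∈ f)).filter (fun f => a ∈ f), F f)
        + ∑ f ∈ ((pmEdges n).filter (fun f => b ∈ f)).filter (fun f => ¬ a ∈ f), F f :=
    (Finset.sum_filter_add_sum_filter_not _ _ _).symm
  have A4 : ((pmEdges n).filter (fun f => b ∈ f)).filter (fun f => a ∈ f)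
      = {s(a, b)} := by
    ext f
    simp only [Finset.filter_filter, Finset.mem_filter, Finset.mem_singleton, mem_pmEdges]
    constructor
    · rintro ⟨hnd, hbf, haf⟩
      exact ((Sym2.mem_and_mem_iff hab).mp ⟨haf, hbf⟩)
    · rintro rfl
      exact ⟨fun hd => hab (Sym2.mk_isDiag_iff.mp hd),
        Sym2.mem_mk_right _ _, Sym2.mem_mk_left _ _⟩
  have A5 : ((pmEdges n).filter (fun f => b ∈ f)).filter (fun f => ¬ a ∈ f)
      = ((pmEdges n).filter (fun f => ¬ a ∈ f)).filter (fun f => b ∈ f) :=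
    Finset.filter_comm _ _ _
  have h0 := sum_bCoe_total hn A c hA
  have h1 := sum_bCoe_vertex hn A c hA a
  have h2 := sum_bCoe_vertex hn A c hA b
  rw [A4, Finset.sum_singleton, A5] at A3
  rw [← hF] at h0 h1 h2
  rw [h1] at A1
  rw [h0] at A1
  rw [h2] at A3
  linarith [A1, A2, A3]

lemma disj_ncard {n : ℕ} {a b : Fin (2 * n)} (hab : a ≠ b) :
    ∀ f : Sym2 (Fin (2 * n)), ¬f.IsDiag → a ∉ f → b ∉ f →
      (pmStar n s(a, b) ∩ pmStar n f).ncard = Nat.doubleFactorial (2 * n - 5) := by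
  intro f
  induction f using Sym2.ind with
  | _ u v =>
    intro hnd haf hbf
    have huv : u ≠ v := fun h => hnd (Sym2.mk_isDiag_iff.mpr h)
    simp only [Sym2.mem_iff, not_or] at haf hbf
    exact pmStar_inter_ncard hab huv (fun h => haf.1 h.symm) (fun h => hbf.1 h.symm)
      (fun h => haf.2 h.symm) (fun h => hbf.2 h.symm)

lemma pm_inner_sum {n : ℕ} (hn : 3 ≤ n) (A : Set (PMatching n)) (c : ℝ)
    (hA : (A.ncard : ℝ) = c * (Nat.doubleFactorial (2 * n - 3) : ℝ))
    {a b : Fin (2 * n)} (hab : a ≠ b) :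
    ∑ f ∈ pmEdges n, bCoe n A c f * ((pmStar n s(a, b) ∩ pmStar n f).ncard : ℝ)
      = bCoe n A c s(a, b) *
        ((Nat.doubleFactorial (2 * n - 3) : ℝ) + (Nat.doubleFactorial (2 * n - 5) : ℝ)) := by
  classical
  set G := fun f => bCoe n A c f * ((pmStar n s(a, b) ∩ pmStar n f).ncard : ℝ) with hG
  have A1 : ∑ f ∈ pmEdges n, G f
      = (∑ f ∈ (pmEdges n).filter (fun f => a ∈ f), G f)
        + ∑ f ∈ (pmEdges n).filter (fun f => ¬ a ∈ f), G f :=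
    (Finset.sum_filter_add_sum_filter_not _ _ _).symm
  have A2 : ∑ f ∈ (pmEdges n).filter (fun f => ¬ a ∈ f), G f
      = (∑ f ∈ ((pmEdges n).filter (fun f => ¬ a ∈ f)).filter (fun f => b ∈ f), G f)
        + ∑ f ∈ ((pmEdges n).filter (fun f => ¬ a ∈ f)).filter (fun f => ¬ b ∈ f), G f :=
    (Finset.sum_filter_add_sum_filter_not _ _ _).symm
  -- first group: only f = s(a,b) survives
  have B1 : ∑ f ∈ (pmEdges n).filter (fun f => a ∈ f), G f
      = bCoe n A c s(a, b) * (Nat.doubleFactorial (2 * n - 3) : ℝ) := by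
    rw [Finset.sum_eq_single_of_mem s(a, b)]
    · rw [hG]
      simp only [Set.inter_self]
      rw [pmStar_ncard hab]
    · exact Finset.mem_filter.mpr ⟨mem_pmEdges.mpr
        (fun hd => hab (Sym2.mk_isDiag_iff.mp hd)), Sym2.mem_mk_left _ _⟩
    · intro f hf hfe
      have haf : a ∈ f := (Finset.mem_filter.mp hf).2
      rw [hG]
      simp only
      rw [pmStar_inter_empty (fun h => hfe h.symm) (Sym2.mem_mk_left a b) haf,
        Set.ncard_empty]
      simp
  -- second group: all terms vanish
  have B2 : ∑ f ∈ ((pmEdges n).filter (fun f => ¬ a ∈ f)).filter (fun f => b ∈ f), G f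
      = 0 := by
    refine Finset.sum_eq_zero fun f hf => ?_
    simp only [Finset.mem_filter] at hf
    have hbf : b ∈ f := hf.2
    have haf : ¬ a ∈ f := hf.1.2
    have hfe : s(a, b) ≠ f := fun h => haf (h ▸ Sym2.mem_mk_left a b)
    rw [hG]
    simp only
    rw [pmStar_inter_empty hfe (Sym2.mem_mk_right a b) hbf, Set.ncard_empty]
    simp
  -- third group: disjoint edges
  have B3 : ∑ f ∈ ((pmEdges n).filter (fun f => ¬ a ∈ f)).filter (fun f => ¬ b ∈ f), G f
      = bCoe n A c s(a, b) * (Nat.doubleFactorial (2 * n - 5) : ℝ) := by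
    have hcong : ∀ f ∈ ((pmEdges n).filter (fun f => ¬ a ∈ f)).filter (fun f => ¬ b ∈ f),
        G f = bCoe n A c f * (Nat.doubleFactorial (2 * n - 5) : ℝ) := by
      intro f hf
      simp only [Finset.mem_filter, mem_pmEdges] at hf
      obtain ⟨⟨hnd, haf⟩, hbf⟩ := hf
      rw [hG]
      simp only
      rw [disj_ncard hab f hnd haf hbf]
    rw [Finset.sum_congr rfl hcong, ← Finset.sum_mul,
      sum_bCoe_disjoint hn A c hA hab]
  rw [A1, A2, B1, B2, B3]
  ring

lemma pm_inner_sum' {n : ℕ} (hn : 3 ≤ n) (A : Set (PMatching n)) (c : ℝ)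
    (hA : (A.ncard : ℝ) = c * (Nat.doubleFactorial (2 * n - 3) : ℝ)) :
    ∀ e : Sym2 (Fin (2 * n)), ¬e.IsDiag →
      ∑ f ∈ pmEdges n, bCoe n A c f * ((pmStar n e ∩ pmStar n f).ncard : ℝ)
        = bCoe n A c e *
          ((Nat.doubleFactorial (2 * n - 3) : ℝ) + (Nat.doubleFactorial (2 * n - 5) : ℝ)) := by
  intro e
  induction e using Sym2.ind with
  | _ a b =>
    intro hnd
    exact pm_inner_sum hn A c hA (fun h => hnd (Sym2.mk_isDiag_iff.mpr h))

end Aux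

/-- Second moment of `h`: `E[h²] = ((2n-2)/((2n-1)(2n-3))) Σ_e b_e²`. -/
theorem stmt14 (n : ℕ) (hn : 3 ≤ n) (A : Set (PMatching n)) (c : ℝ) (hc : 0 ≤ c)
    (hA : (A.ncard : ℝ) = c * (Nat.doubleFactorial (2 * n - 3) : ℝ)) :
    pmExp n (fun m => hFun n A c m ^ 2) =
      ((2 * (n : ℝ) - 2) / ((2 * (n : ℝ) - 1) * (2 * (n : ℝ) - 3))) *
        ∑ e ∈ pmEdges n, bCoe n A c e ^ 2 := by
  classical
  have hx : (3 : ℝ) ≤ (n : ℝ) := by exact_mod_cast hn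
  have hne1 : 2 * (n : ℝ) - 1 ≠ 0 := by nlinarith
  have hne3 : 2 * (n : ℝ) - 3 ≠ 0 := by nlinarith
  set d3 := (Nat.doubleFactorial (2 * n - 3) : ℝ) with hd3
  set d5 := (Nat.doubleFactorial (2 * n - 5) : ℝ) with hd5
  have step1 : ∑ m : PMatching n, hFun n A c m ^ 2
      = ∑ e ∈ pmEdges n, ∑ f ∈ pmEdges n,
          bCoe n A c e * (bCoe n A c f * ((pmStar n e ∩ pmStar n f).ncard : ℝ)) := by
    have hm : ∀ m : PMatching n, hFun n A c m ^ 2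
        = ∑ e ∈ pmEdges n, ∑ f ∈ pmEdges n, bCoe n A c e * (bCoe n A c f *
            (Set.indicator (pmStar n e) 1 m * Set.indicator (pmStar n f) 1 m)) := by
      intro m
      rw [sq, hFun, Finset.sum_mul_sum]
      exact Finset.sum_congr rfl fun e _ => Finset.sum_congr rfl fun f _ => by ring
    rw [Finset.sum_congr rfl fun m (_ : m ∈ Finset.univ) => hm m, Finset.sum_comm]
    refine Finset.sum_congr rfl fun e he => ?_
    rw [Finset.sum_comm]
    have hper : ∀ f ∈ pmEdges n,
        (∑ m : PMatching n, bCoe n A c e * (bCoe n A c f *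
          (Set.indicator (pmStar n e) 1 m * Set.indicator (pmStar n f) 1 m)))
        = bCoe n A c e * (bCoe n A c f * ((pmStar n e ∩ pmStar n f).ncard : ℝ)) := by
      intro f hf
      have hind : ∀ m : PMatching n,
          Set.indicator (pmStar n e) 1 m * Set.indicator (pmStar n f) 1 m
            = Set.indicator (pmStar n e ∩ pmStar n f) (1 : PMatching n → ℝ) m := by
        intro m
        by_cases h1 : m ∈ pmStar n e <;> by_cases h2 : m ∈ pmStar n f <;>
          simp [Set.indicator_apply, h1, h2, Set.mem_inter_iff]
      rw [← Finset.mul_sum, ← Finset.mul_sum,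
        Finset.sum_congr rfl fun m _ => hind m, sum_indicator_eq_ncard]
    exact Finset.sum_congr rfl hper
  have step2 : ∑ e ∈ pmEdges n, ∑ f ∈ pmEdges n,
      bCoe n A c e * (bCoe n A c f * ((pmStar n e ∩ pmStar n f).ncard : ℝ))
        = (d3 + d5) * ∑ e ∈ pmEdges n, bCoe n A c e ^ 2 := by
    rw [Finset.mul_sum]
    refine Finset.sum_congr rfl fun e he => ?_
    rw [← Finset.mul_sum, pm_inner_sum' hn A c hA e (mem_pmEdges.mp he)]
    ring
  have hDn : (2 * n - 1)‼ = (2 * n - 1) * ((2 * n - 3) * (2 * n - 5)‼) := by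
    rw [show 2 * n - 1 = (2 * n - 5) + 2 + 2 from by omega, Nat.doubleFactorial_add_two,
      Nat.doubleFactorial_add_two, show (2 * n - 5) + 2 + 2 = 2 * n - 1 from by omega,
      show (2 * n - 5) + 2 = 2 * n - 3 from by omega]
  have hd3n : (2 * n - 3)‼ = (2 * n - 3) * (2 * n - 5)‼ := by
    rw [show 2 * n - 3 = (2 * n - 5) + 2 from by omega, Nat.doubleFactorial_add_two,
      show (2 * n - 5) + 2 = 2 * n - 3 from by omega]
  have c1 : ((2 * n - 1 : ℕ) : ℝ) = 2 * (n : ℝ) - 1 := by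
    have : 1 ≤ 2 * n := by omega
    push_cast [Nat.cast_sub this]; ring
  have c3 : ((2 * n - 3 : ℕ) : ℝ) = 2 * (n : ℝ) - 3 := by
    have : 3 ≤ 2 * n := by omega
    push_cast [Nat.cast_sub this]; ring
  have hD : ((Nat.doubleFactorial (2 * n - 1) : ℕ) : ℝ)
      = (2 * (n : ℝ) - 1) * ((2 * (n : ℝ) - 3) * d5) := by
    rw [hDn]
    push_cast [c1, c3]
    rw [hd5]
  have hd3e : d3 = (2 * (n : ℝ) - 3) * d5 := by
    rw [hd3, hd3n]
    push_cast [c3]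
    rw [hd5]
  have hd5ne : d5 ≠ 0 := by rw [hd5]; exact dF_cast_ne
  rw [pmExp, step1, step2, hD, hd3e]
  field_simp
  ring


end
end

section
/- Σ_{{x,y,z}} b_{{x,y}}·b_{{x,z}}·b_{{y,z}} ≥ 2c³n(2n−2)/(3(2n−1)²) − c³n/(2n−1), where the sum is over all 3-element subsets {x,y,z} of the vertex set of K_{2n} (equivalently, over all unordered triples of edges of K_{2n} pairwise intersecting in exactly one vertex, i.e. triangles). -/
set_option linter.unusedVariables false

open scoped Classical

noncomputable section

lemma mem_pmStar_iff (n : ℕ) (m : PMatching n) (x y : Fin (2 * n)) :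
    m ∈ pmStar n s(x, y) ↔ m.1 x = y := by
  constructor
  · rintro ⟨w, hw⟩
    rw [Sym2.eq_iff] at hw
    rcases hw with ⟨rfl, rfl⟩ | ⟨hx, rfl⟩
    · rfl
    · rw [hx]; exact m.2.1 _
  · intro h; exact ⟨x, by rw [h]⟩

lemma row_ncard (n : ℕ) (A : Set (PMatching n)) (x : Fin (2 * n)) :
    ∑ y : Fin (2 * n), ((A ∩ pmStar n s(x, y)).ncard : ℝ) = (A.ncard : ℝ) := by
  set F := (Set.toFinite A).toFinset with hF
  have h1 : ∀ y : Fin (2 * n), (A ∩ pmStar n s(x, y)).ncard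
      = (F.filter fun m => m.1 x = y).card := by
    intro y
    rw [← Set.ncard_coe_finset]
    congr 1
    ext m
    simp only [Finset.coe_filter, hF, Set.Finite.mem_toFinset, Set.mem_setOf_eq]
    show m ∈ A ∩ pmStar n s(x,y) ↔ _
    rw [Set.mem_inter_iff, mem_pmStar_iff]
  have h2 : F.card = ∑ y : Fin (2 * n), (F.filter fun m => m.1 x = y).card :=
    Finset.card_eq_sum_card_fiberwise (fun m _ => Finset.mem_univ _)
  simp only [h1]
  rw [← Nat.cast_sum, ← h2, Set.ncard_eq_toFinset_card _ (Set.toFinite A)]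


lemma sum_ite_count {M : ℕ} (P : Fin M → Prop) [DecidablePred P] (w : ℝ) :
    ∑ z : Fin M, (if P z then w else 0) = ((Finset.univ.filter P).card : ℝ) * w := by
  rw [Finset.sum_ite, Finset.sum_const, Finset.sum_const]
  simp [nsmul_eq_mul]

lemma card_ne_one {M : ℕ} (x : Fin M) (hM : 1 ≤ M) :
    (((Finset.univ.filter fun z : Fin M => z ≠ x).card : ℝ)) = (M : ℝ) - 1 := by
  have : (Finset.univ.filter fun z : Fin M => z ≠ x) = ({x} : Finset (Fin M))ᶜ := by
    ext z; simp
  rw [this, Finset.card_compl, Finset.card_singleton]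
  have : 1 ≤ Fintype.card (Fin M) := by simpa using hM
  push_cast [Nat.cast_sub this]
  simp

lemma card_ne_one' {M : ℕ} (x : Fin M) (hM : 1 ≤ M) :
    (((Finset.univ.filter fun z : Fin M => x ≠ z).card : ℝ)) = (M : ℝ) - 1 := by
  have h : (Finset.univ.filter fun z : Fin M => x ≠ z)
      = Finset.univ.filter fun z : Fin M => z ≠ x := by
    ext z; simp [ne_comm]
  rw [h, card_ne_one x hM]

lemma card_ne_two {M : ℕ} (x y : Fin M) (hxy : x ≠ y) (hM : 2 ≤ M) :
    (((Finset.univ.filter fun z : Fin M => z ≠ x ∧ z ≠ y).card : ℝ)) = (M : ℝ) - 2 := by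
  have h : (Finset.univ.filter fun z : Fin M => z ≠ x ∧ z ≠ y) = ({x, y} : Finset (Fin M))ᶜ := by
    ext z; simp [not_or]
  rw [h, Finset.card_compl]
  have h2 : ({x, y} : Finset (Fin M)).card = 2 := by
    rw [Finset.card_insert_of_notMem (by simpa using hxy), Finset.card_singleton]
  rw [h2]
  have : 2 ≤ Fintype.card (Fin M) := by simpa using hM
  push_cast [Nat.cast_sub this]
  simp

lemma pair_bound {M : ℕ} (c : ℝ) (f : Fin M → ℝ) (hf : ∀ i, 0 ≤ f i)
    (hsum : ∑ i, f i = c) :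
    ∑ u : Fin M, ∑ v : Fin M, (if u ≠ v then f u * f v else 0) ≤ c ^ 2 := by
  have h1 : ∀ u, ∑ v : Fin M, (if u ≠ v then f u * f v else 0) = f u * c - f u * f u := by
    intro u
    have hpt : ∀ v, (if u ≠ v then f u * f v else 0)
        = f u * f v - (if v = u then f u * f v else 0) := by
      intro v
      rcases eq_or_ne v u with rfl | h
      · simp
      · rw [if_pos (Ne.symm h), if_neg h]; ring
    rw [Finset.sum_congr rfl (fun v _ => hpt v), Finset.sum_sub_distrib, ← Finset.mul_sum,
      hsum, Finset.sum_ite_eq' Finset.univ u (fun v => f u * f v)]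
    simp
  rw [Finset.sum_congr rfl (fun u _ => h1 u), Finset.sum_sub_distrib, ← Finset.sum_mul, hsum]
  have : 0 ≤ ∑ u : Fin M, f u * f u :=
    Finset.sum_nonneg fun u _ => mul_self_nonneg (f u)
  nlinarith


lemma key_bound (M : ℕ) (hM : 3 ≤ M) (c t : ℝ) (hc : 0 ≤ c) (ht : 0 ≤ t)
    (a : Fin M → Fin M → ℝ) (hsymm : ∀ x y, a x y = a y x) (hpos : ∀ x y, 0 ≤ a x y)
    (hdiag : ∀ x, a x x = 0) (hrow : ∀ x, ∑ y, a x y = c) :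
    -(3 * t * M * c ^ 2) + 3 * t ^ 2 * ((M : ℝ) - 2) * M * c
        - t ^ 3 * M * ((M : ℝ) - 1) * ((M : ℝ) - 2) ≤
      ∑ x : Fin M, ∑ y : Fin M, ∑ z : Fin M,
        if x ≠ y ∧ x ≠ z ∧ y ≠ z then (a x y - t) * (a x z - t) * (a y z - t) else 0 := by
  have hM2 : 2 ≤ M := by omega
  have hM1 : 1 ≤ M := by omega
  have hcol : ∀ z, ∑ u, a u z = c := by
    intro z
    rw [Finset.sum_congr rfl (fun u _ => hsymm u z)]
    exact hrow z
  -- pointwise expansion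
  have expand : ∀ x y z : Fin M,
      (if x ≠ y ∧ x ≠ z ∧ y ≠ z then (a x y - t) * (a x z - t) * (a y z - t) else 0)
      = (if x ≠ y ∧ x ≠ z ∧ y ≠ z then a x y * a x z * a y z else 0)
        - t * (if x ≠ y ∧ x ≠ z ∧ y ≠ z then a x y * a x z else 0)
        - t * (if x ≠ y ∧ x ≠ z ∧ y ≠ z then a x y * a y z else 0)
        - t * (if x ≠ y ∧ x ≠ z ∧ y ≠ z then a x z * a y z else 0)
        + t ^ 2 * (if x ≠ y ∧ x ≠ z ∧ y ≠ z then a x y else 0)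
        + t ^ 2 * (if x ≠ y ∧ x ≠ z ∧ y ≠ z then a x z else 0)
        + t ^ 2 * (if x ≠ y ∧ x ≠ z ∧ y ≠ z then a y z else 0)
        - t ^ 3 * (if x ≠ y ∧ x ≠ z ∧ y ≠ z then (1 : ℝ) else 0) := by
    intro x y z; split_ifs <;> ring
  have hsplit : (∑ x : Fin M, ∑ y : Fin M, ∑ z : Fin M,
        if x ≠ y ∧ x ≠ z ∧ y ≠ z then (a x y - t) * (a x z - t) * (a y z - t) else 0)
      = (∑ x : Fin M, ∑ y : Fin M, ∑ z : Fin M,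
          if x ≠ y ∧ x ≠ z ∧ y ≠ z then a x y * a x z * a y z else 0)
        - t * (∑ x : Fin M, ∑ y : Fin M, ∑ z : Fin M,
            if x ≠ y ∧ x ≠ z ∧ y ≠ z then a x y * a x z else 0)
        - t * (∑ x : Fin M, ∑ y : Fin M, ∑ z : Fin M,
            if x ≠ y ∧ x ≠ z ∧ y ≠ z then a x y * a y z else 0)
        - t * (∑ x : Fin M, ∑ y : Fin M, ∑ z : Fin M,
            if x ≠ y ∧ x ≠ z ∧ y ≠ z then a x z * a y z else 0)
        + t ^ 2 * (∑ x : Fin M, ∑ y : Fin M, ∑ z : Fin M,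
            if x ≠ y ∧ x ≠ z ∧ y ≠ z then a x y else 0)
        + t ^ 2 * (∑ x : Fin M, ∑ y : Fin M, ∑ z : Fin M,
            if x ≠ y ∧ x ≠ z ∧ y ≠ z then a x z else 0)
        + t ^ 2 * (∑ x : Fin M, ∑ y : Fin M, ∑ z : Fin M,
            if x ≠ y ∧ x ≠ z ∧ y ≠ z then a y z else 0)
        - t ^ 3 * (∑ x : Fin M, ∑ y : Fin M, ∑ z : Fin M,
            if x ≠ y ∧ x ≠ z ∧ y ≠ z then (1 : ℝ) else 0) := by
    simp only [expand, Finset.sum_sub_distrib, Finset.sum_add_distrib, ← Finset.mul_sum]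
  rw [hsplit]
  -- notation for predicates
  have ifmono : ∀ (P Q : Prop) [Decidable P] [Decidable Q] (v : ℝ), 0 ≤ v → (P → Q) →
      (if P then v else 0) ≤ (if Q then v else 0) := by
    intro P Q _ _ v hv hPQ
    split_ifs with h1 h2
    · exact le_rfl
    · exact absurd (hPQ h1) h2
    · exact hv
    · exact le_rfl
  -- cubic term nonnegative
  have hS3 : (0:ℝ) ≤ ∑ x : Fin M, ∑ y : Fin M, ∑ z : Fin M,
      if x ≠ y ∧ x ≠ z ∧ y ≠ z then a x y * a x z * a y z else 0 := by
    refine Finset.sum_nonneg fun x _ => Finset.sum_nonneg fun y _ =>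
      Finset.sum_nonneg fun z _ => ?_
    split_ifs
    · exact mul_nonneg (mul_nonneg (hpos _ _) (hpos _ _)) (hpos _ _)
    · exact le_rfl
  -- quadratic bounds
  have hB1 : (∑ x : Fin M, ∑ y : Fin M, ∑ z : Fin M,
      if x ≠ y ∧ x ≠ z ∧ y ≠ z then a x y * a x z else 0) ≤ M * c ^ 2 := by
    calc (∑ x : Fin M, ∑ y : Fin M, ∑ z : Fin M,
        if x ≠ y ∧ x ≠ z ∧ y ≠ z then a x y * a x z else 0)
        ≤ ∑ x : Fin M, c ^ 2 := by
          refine Finset.sum_le_sum fun x _ => ?_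
          calc (∑ y : Fin M, ∑ z : Fin M,
              if x ≠ y ∧ x ≠ z ∧ y ≠ z then a x y * a x z else 0)
              ≤ ∑ y : Fin M, ∑ z : Fin M, (if y ≠ z then a x y * a x z else 0) := by
                refine Finset.sum_le_sum fun y _ => Finset.sum_le_sum fun z _ =>
                  ifmono _ _ _ (mul_nonneg (hpos _ _) (hpos _ _)) fun h => h.2.2
            _ ≤ c ^ 2 := pair_bound c (a x) (hpos x) (hrow x)
      _ = M * c ^ 2 := by simp [Finset.sum_const, Finset.card_univ, nsmul_eq_mul]
  have hB2 : (∑ x : Fin M, ∑ y : Fin M, ∑ z : Fin M,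
      if x ≠ y ∧ x ≠ z ∧ y ≠ z then a x y * a y z else 0) ≤ M * c ^ 2 := by
    rw [Finset.sum_comm]
    calc (∑ y : Fin M, ∑ x : Fin M, ∑ z : Fin M,
        if x ≠ y ∧ x ≠ z ∧ y ≠ z then a x y * a y z else 0)
        ≤ ∑ y : Fin M, c ^ 2 := by
          refine Finset.sum_le_sum fun y _ => ?_
          calc (∑ x : Fin M, ∑ z : Fin M,
              if x ≠ y ∧ x ≠ z ∧ y ≠ z then a x y * a y z else 0)
              ≤ ∑ x : Fin M, ∑ z : Fin M, (if x ≠ z then a y x * a y z else 0) := by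
                refine Finset.sum_le_sum fun x _ => Finset.sum_le_sum fun z _ => ?_
                rw [hsymm x y]
                exact ifmono _ _ _ (mul_nonneg (hpos _ _) (hpos _ _)) fun h => h.2.1
            _ ≤ c ^ 2 := pair_bound c (a y) (hpos y) (hrow y)
      _ = M * c ^ 2 := by simp [Finset.sum_const, Finset.card_univ, nsmul_eq_mul]
  have hB3 : (∑ x : Fin M, ∑ y : Fin M, ∑ z : Fin M,
      if x ≠ y ∧ x ≠ z ∧ y ≠ z then a x z * a y z else 0) ≤ M * c ^ 2 := by
    have hswap : (∑ x : Fin M, ∑ y : Fin M, ∑ z : Fin M,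
        if x ≠ y ∧ x ≠ z ∧ y ≠ z then a x z * a y z else 0)
        = ∑ z : Fin M, ∑ x : Fin M, ∑ y : Fin M,
          if x ≠ y ∧ x ≠ z ∧ y ≠ z then a x z * a y z else 0 := by
      rw [Finset.sum_congr rfl fun x _ => Finset.sum_comm, Finset.sum_comm]
    rw [hswap]
    calc (∑ z : Fin M, ∑ x : Fin M, ∑ y : Fin M,
        if x ≠ y ∧ x ≠ z ∧ y ≠ z then a x z * a y z else 0)
        ≤ ∑ z : Fin M, c ^ 2 := by
          refine Finset.sum_le_sum fun z _ => ?_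
          calc (∑ x : Fin M, ∑ y : Fin M,
              if x ≠ y ∧ x ≠ z ∧ y ≠ z then a x z * a y z else 0)
              ≤ ∑ x : Fin M, ∑ y : Fin M, (if x ≠ y then a x z * a y z else 0) := by
                refine Finset.sum_le_sum fun x _ => Finset.sum_le_sum fun y _ =>
                  ifmono _ _ _ (mul_nonneg (hpos _ _) (hpos _ _)) fun h => h.1
            _ ≤ c ^ 2 := pair_bound c (fun u => a u z) (fun u => hpos u z) (hcol z)
      _ = M * c ^ 2 := by simp [Finset.sum_const, Finset.card_univ, nsmul_eq_mul]
  -- linear terms, exact value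
  have inner_count : ∀ (u v : Fin M) (w : ℝ),
      (∑ z : Fin M, if u ≠ v ∧ u ≠ z ∧ v ≠ z then w else 0)
      = (if u ≠ v then ((M:ℝ) - 2) * w else 0) := by
    intro u v w
    rcases eq_or_ne u v with rfl | huv
    · simp
    · rw [if_pos huv, sum_ite_count]
      have : (Finset.univ.filter fun z : Fin M => u ≠ v ∧ u ≠ z ∧ v ≠ z)
          = Finset.univ.filter fun z : Fin M => z ≠ u ∧ z ≠ v := by
        ext z
        simp only [Finset.mem_filter, Finset.mem_univ, true_and]
        constructor
        · rintro ⟨-, h1, h2⟩; exact ⟨Ne.symm h1, Ne.symm h2⟩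
        · rintro ⟨h1, h2⟩; exact ⟨huv, Ne.symm h1, Ne.symm h2⟩
      rw [this, card_ne_two u v huv hM2]
  have drop_if : ∀ (u v : Fin M), (if u ≠ v then ((M:ℝ) - 2) * a u v else 0)
      = ((M:ℝ) - 2) * a u v := by
    intro u v
    rcases eq_or_ne u v with rfl | huv
    · simp [hdiag]
    · rw [if_pos huv]
  have double_sum : ∀ f : Fin M → Fin M → ℝ, (∀ u, ∑ v, f u v = c) →
      (∑ u : Fin M, ∑ v : Fin M, ((M:ℝ) - 2) * f u v) = ((M:ℝ) - 2) * (M * c) := by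
    intro f hf
    simp only [← Finset.mul_sum, hf]
    simp only [Finset.sum_const, Finset.card_univ, Fintype.card_fin, nsmul_eq_mul]
  have hC1 : (∑ x : Fin M, ∑ y : Fin M, ∑ z : Fin M,
      if x ≠ y ∧ x ≠ z ∧ y ≠ z then a x y else 0) = ((M:ℝ) - 2) * (M * c) := by
    calc (∑ x : Fin M, ∑ y : Fin M, ∑ z : Fin M,
        if x ≠ y ∧ x ≠ z ∧ y ≠ z then a x y else 0)
        = ∑ x : Fin M, ∑ y : Fin M, ((M:ℝ) - 2) * a x y := by
          refine Finset.sum_congr rfl fun x _ => Finset.sum_congr rfl fun y _ => ?_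
          rw [inner_count, drop_if]
      _ = ((M:ℝ) - 2) * (M * c) := double_sum a hrow
  have hC2 : (∑ x : Fin M, ∑ y : Fin M, ∑ z : Fin M,
      if x ≠ y ∧ x ≠ z ∧ y ≠ z then a x z else 0) = ((M:ℝ) - 2) * (M * c) := by
    calc (∑ x : Fin M, ∑ y : Fin M, ∑ z : Fin M,
        if x ≠ y ∧ x ≠ z ∧ y ≠ z then a x z else 0)
        = ∑ x : Fin M, ∑ z : Fin M, ∑ y : Fin M,
          if x ≠ y ∧ x ≠ z ∧ y ≠ z then a x z else 0 :=
          Finset.sum_congr rfl fun x _ => Finset.sum_comm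
      _ = ∑ x : Fin M, ∑ z : Fin M, ((M:ℝ) - 2) * a x z := by
          refine Finset.sum_congr rfl fun x _ => Finset.sum_congr rfl fun z _ => ?_
          have : (∑ y : Fin M, if x ≠ y ∧ x ≠ z ∧ y ≠ z then a x z else 0)
              = ∑ y : Fin M, if x ≠ z ∧ x ≠ y ∧ z ≠ y then a x z else 0 := by
            refine Finset.sum_congr rfl fun y _ => if_congr ?_ rfl rfl
            constructor
            · rintro ⟨h1, h2, h3⟩; exact ⟨h2, h1, Ne.symm h3⟩
            · rintro ⟨h1, h2, h3⟩; exact ⟨h2, h1, Ne.symm h3⟩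
          rw [this, inner_count, drop_if]
      _ = ((M:ℝ) - 2) * (M * c) := double_sum a hrow
  have hC3 : (∑ x : Fin M, ∑ y : Fin M, ∑ z : Fin M,
      if x ≠ y ∧ x ≠ z ∧ y ≠ z then a y z else 0) = ((M:ℝ) - 2) * (M * c) := by
    have hswap : (∑ x : Fin M, ∑ y : Fin M, ∑ z : Fin M,
        if x ≠ y ∧ x ≠ z ∧ y ≠ z then a y z else 0)
        = ∑ y : Fin M, ∑ z : Fin M, ∑ x : Fin M,
          if x ≠ y ∧ x ≠ z ∧ y ≠ z then a y z else 0 := by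
      rw [Finset.sum_comm]
      exact Finset.sum_congr rfl fun y _ => Finset.sum_comm
    rw [hswap]
    calc (∑ y : Fin M, ∑ z : Fin M, ∑ x : Fin M,
        if x ≠ y ∧ x ≠ z ∧ y ≠ z then a y z else 0)
        = ∑ y : Fin M, ∑ z : Fin M, ((M:ℝ) - 2) * a y z := by
          refine Finset.sum_congr rfl fun y _ => Finset.sum_congr rfl fun z _ => ?_
          have : (∑ x : Fin M, if x ≠ y ∧ x ≠ z ∧ y ≠ z then a y z else 0)
              = ∑ x : Fin M, if y ≠ z ∧ y ≠ x ∧ z ≠ x then a y z else 0 := by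
            refine Finset.sum_congr rfl fun x _ => if_congr ?_ rfl rfl
            constructor
            · rintro ⟨h1, h2, h3⟩; exact ⟨h3, Ne.symm h1, Ne.symm h2⟩
            · rintro ⟨h1, h2, h3⟩; exact ⟨Ne.symm h2, Ne.symm h3, h1⟩
          rw [this, inner_count, drop_if]
      _ = ((M:ℝ) - 2) * (M * c) := double_sum a hrow
  -- counting term
  have hD0 : (∑ x : Fin M, ∑ y : Fin M, ∑ z : Fin M,
      if x ≠ y ∧ x ≠ z ∧ y ≠ z then (1:ℝ) else 0) = M * ((M:ℝ) - 1) * ((M:ℝ) - 2) := by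
    calc (∑ x : Fin M, ∑ y : Fin M, ∑ z : Fin M,
        if x ≠ y ∧ x ≠ z ∧ y ≠ z then (1:ℝ) else 0)
        = ∑ x : Fin M, ∑ y : Fin M, (if x ≠ y then ((M:ℝ) - 2) * 1 else 0) := by
          exact Finset.sum_congr rfl fun x _ => Finset.sum_congr rfl fun y _ =>
            inner_count x y 1
      _ = ∑ x : Fin M, ((M:ℝ) - 1) * (((M:ℝ) - 2) * 1) := by
          refine Finset.sum_congr rfl fun x _ => ?_
          rw [sum_ite_count, card_ne_one' x hM1]
      _ = M * ((M:ℝ) - 1) * ((M:ℝ) - 2) := by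
          simp only [Finset.sum_const, Finset.card_univ, Fintype.card_fin, nsmul_eq_mul]
          ring
  rw [hC1, hC2, hC3, hD0]
  have e1 := mul_le_mul_of_nonneg_left hB1 ht
  have e2 := mul_le_mul_of_nonneg_left hB2 ht
  have e3 := mul_le_mul_of_nonneg_left hB3 ht
  nlinarith [hS3, e1, e2, e3]


/-- Lower bound on the triangle sum `Σ_{{x,y,z}} b_{xy} b_{xz} b_{yz}` (over 3-element subsets
of the vertex set of `K_{2n}`, written as one sixth of the sum over ordered triples of pairwise
distinct vertices): it is at least `2c³n(2n-2)/(3(2n-1)²) - c³n/(2n-1)`. -/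
theorem stmt15 (n : ℕ) (hn : 3 ≤ n) (A : Set (PMatching n)) (c : ℝ) (hc : 0 ≤ c)
    (hA : (A.ncard : ℝ) = c * (Nat.doubleFactorial (2 * n - 3) : ℝ)) :
    2 * c ^ 3 * (n : ℝ) * (2 * (n : ℝ) - 2) / (3 * (2 * (n : ℝ) - 1) ^ 2) -
        c ^ 3 * (n : ℝ) / (2 * (n : ℝ) - 1) ≤
      (1 / 6) * ∑ x : Fin (2 * n), ∑ y : Fin (2 * n), ∑ z : Fin (2 * n),
        if x ≠ y ∧ x ≠ z ∧ y ≠ z then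
          bCoe n A c s(x, y) * bCoe n A c s(x, z) * bCoe n A c s(y, z)
        else 0 := by
  have hn1 : (5:ℝ) ≤ 2 * (n : ℝ) - 1 := by
    have : (3:ℝ) ≤ (n : ℝ) := by exact_mod_cast hn
    linarith
  have hne : (2 * (n : ℝ) - 1) ≠ 0 := by linarith
  have hD : (0:ℝ) < (Nat.doubleFactorial (2 * n - 3) : ℝ) := by
    exact_mod_cast Nat.doubleFactorial_pos (2 * n - 3)
  set t : ℝ := c / (2 * (n : ℝ) - 1) with ht_def
  have ht : 0 ≤ t := div_nonneg hc (by linarith)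
  set a : Fin (2 * n) → Fin (2 * n) → ℝ := fun x y => aCoe n A s(x, y) with ha_def
  have hpos : ∀ x y, 0 ≤ a x y := fun x y =>
    div_nonneg (Nat.cast_nonneg _) (le_of_lt hD)
  have hsymm : ∀ x y, a x y = a y x := by
    intro x y
    simp only [ha_def]
    rw [Sym2.eq_swap]
  have hdiag : ∀ x, a x x = 0 := by
    intro x
    simp only [ha_def, aCoe]
    have : A ∩ pmStar n s(x, x) = ∅ := by
      ext m
      simp only [Set.mem_inter_iff, Set.mem_empty_iff_false, iff_false]
      rintro ⟨-, hm⟩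
      exact m.2.2 x ((mem_pmStar_iff n m x x).mp hm)
    rw [this]
    simp
  have hrow : ∀ x, ∑ y, a x y = c := by
    intro x
    simp only [ha_def, aCoe]
    rw [← Finset.sum_div, row_ncard, hA]
    field_simp
  have hM : 3 ≤ 2 * n := by omega
  have key := key_bound (2 * n) hM c t hc ht a hsymm hpos hdiag hrow
  have hcast : ((2 * n : ℕ) : ℝ) = 2 * (n : ℝ) := by push_cast; ring
  rw [hcast] at key
  have hgoal_sum : (∑ x : Fin (2 * n), ∑ y : Fin (2 * n), ∑ z : Fin (2 * n),
        if x ≠ y ∧ x ≠ z ∧ y ≠ z then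
          bCoe n A c s(x, y) * bCoe n A c s(x, z) * bCoe n A c s(y, z) else 0)
      = ∑ x : Fin (2 * n), ∑ y : Fin (2 * n), ∑ z : Fin (2 * n),
        if x ≠ y ∧ x ≠ z ∧ y ≠ z then (a x y - t) * (a x z - t) * (a y z - t) else 0 := by
    refine Finset.sum_congr rfl fun x _ => Finset.sum_congr rfl fun y _ =>
      Finset.sum_congr rfl fun z _ => ?_
    simp only [bCoe, ha_def, ht_def]
  rw [hgoal_sum]
  have heq : 2 * c ^ 3 * (n : ℝ) * (2 * (n : ℝ) - 2) / (3 * (2 * (n : ℝ) - 1) ^ 2) -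
        c ^ 3 * (n : ℝ) / (2 * (n : ℝ) - 1)
      = (1/6) * (-(3 * t * (2 * (n : ℝ)) * c ^ 2)
          + 3 * t ^ 2 * ((2 * (n : ℝ)) - 2) * (2 * (n : ℝ)) * c
          - t ^ 3 * (2 * (n : ℝ)) * ((2 * (n : ℝ)) - 1) * ((2 * (n : ℝ)) - 2)) := by
    rw [ht_def]
    field_simp
    ring
  rw [heq]
  linarith [key]


end
end
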